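/- arXiv:1311.2563 — 5 statements merged into one kernel-verified Lean document; each statement's English description precedes it below -/
import Mathlib

section
/- Let G be a finite simple graph, S, T ⊆ V(G) two vertex sets, and k a nonnegative integer. Then the number of important S–T separators of size at most k is at most 4^k. -/
open SimpleGraph

variable {V : Type*}

/-- The open neighbourhood `N_G(C)` of a vertex set `C`:
vertices outside `C` with a neighbour in `C`. -/
def setNbhd (G : SimpleGraph V) (C : Set V) : Set V :=
  {v | v ∉ C ∧ ∃ u ∈ C, G.Adj u v}

/-- The closed neighbourhood `N_G[C] = C ∪ N_G(C)`. -/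
def closedNbhd (G : SimpleGraph V) (C : Set V) : Set V :=
  C ∪ setNbhd G C

/-- `W` is `(q,k)`-unbreakable in the induced subgraph `G[U]`:
every separation `(A,B)` of `G[U]` of order at most `k` has
`|(A∖B) ∩ W| ≤ q` or `|(B∖A) ∩ W| ≤ q`. -/
def UnbreakableIn (G : SimpleGraph V) (U W : Set V) (q k : ℕ) : Prop :=
  ∀ A B : Set V, A ∪ B = U →
    (∀ a ∈ A \ B, ∀ b ∈ B \ A, ¬ G.Adj a b) →
    (A ∩ B).ncard ≤ k →
    ((A \ B) ∩ W).ncard ≤ q ∨ ((B \ A) ∩ W).ncard ≤ q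

/-- `W` is `(q,k)`-unbreakable in `G`. -/
def Unbreakable (G : SimpleGraph V) (W : Set V) (q k : ℕ) : Prop :=
  UnbreakableIn G Set.univ W q k

/-- `x` and `y` lie in the same connected component of `G − W`. -/
def ReachAvoid (G : SimpleGraph V) (W : Set V) (x y : V) : Prop :=
  ∃ (hx : x ∈ Wᶜ) (hy : y ∈ Wᶜ), (G.induce Wᶜ).Reachable ⟨x, hx⟩ ⟨y, hy⟩

/-- `W` is an `X–Y` separator: no connected component of `G − W` contains
a vertex of `X∖W` and a vertex of `Y∖W`. -/
def IsSeparator (G : SimpleGraph V) (X Y W : Set V) : Prop :=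
  ∀ x ∈ X \ W, ∀ y ∈ Y \ W, ¬ ReachAvoid G W x y

/-- `R_{G−W}(X∖W)`: the set of vertices reachable from `X∖W` in `G − W`. -/
def reachSet (G : SimpleGraph V) (W X : Set V) : Set V :=
  {y | ∃ x ∈ X \ W, ReachAvoid G W x y}

/-- `W` is an important `X–Y` separator. -/
def IsImportantSeparator (G : SimpleGraph V) (X Y W : Set V) : Prop :=
  IsSeparator G X Y W ∧
  (∀ W' ⊆ W, IsSeparator G X Y W' → W' = W) ∧
  ∀ W' : Set V, IsSeparator G X Y W' → W'.ncard ≤ W.ncard →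
    ¬ reachSet G W X ⊂ reachSet G W' X

/-- A chip (w.r.t. `G`, `k` and `S`): `G[C]` is connected, `|N_G(C)| ≤ 3k`,
and `N_G(C)` is an important `C–S` separator. -/
def IsChip (G : SimpleGraph V) (k : ℕ) (S C : Set V) : Prop :=
  (G.induce C).Connected ∧ (setNbhd G C).ncard ≤ 3 * k ∧
  IsImportantSeparator G C S (setNbhd G C)

/-- The family of all inclusion-wise maximal chips. -/
def maximalChips (G : SimpleGraph V) (k : ℕ) (S : Set V) : Set (Set V) :=
  {C | IsChip G k S C ∧ ∀ C', IsChip G k S C' → C ⊆ C' → C' = C}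

/-- Two vertex sets touch: they intersect or some edge joins them. -/
def Touches (G : SimpleGraph V) (C₁ C₂ : Set V) : Prop :=
  (C₁ ∩ C₂).Nonempty ∨ ∃ u ∈ C₁, ∃ v ∈ C₂, G.Adj u v

/-- `D` is a connected component of `G − A`: a maximal set disjoint from `A`
inducing a connected subgraph. -/
def IsCompOf (G : SimpleGraph V) (A D : Set V) : Prop :=
  D ⊆ Aᶜ ∧ (G.induce D).Connected ∧
  ∀ D', D ⊆ D' → D' ⊆ Aᶜ → (G.induce D').Connected → D' = D

/-- The set `A = (⋂_{C ∈ 𝒞} V(G) ∖ N[C]) ∪ ⋃_{C ∈ 𝒞} N(C)` built from the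
maximal chips (equals `V(G)` when there are no chips). -/
def chipBag (G : SimpleGraph V) (k : ℕ) (S : Set V) : Set V :=
  (⋂ C ∈ maximalChips G k S, (closedNbhd G C)ᶜ) ∪
    ⋃ C ∈ maximalChips G k S, setNbhd G C

/-- `η(k) = 3k·(3k·4^{3k}+1)`. -/
def etaB (k : ℕ) : ℕ := 3 * k * (3 * k * 4 ^ (3 * k) + 1)

/-- `τ(k) = (3k)²·8^{3k} + 2k`. -/
def tauB (k : ℕ) : ℕ := (3 * k) ^ 2 * 8 ^ (3 * k) + 2 * k

/-- `τ′(k) = τ + (C(τ+k,2)·k + k)·k·η`. -/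
def tauB' (k : ℕ) : ℕ :=
  tauB k + ((tauB k + k).choose 2 * k + k) * k * etaB k

/-- The tree graph determined by a parent function. -/
def parentGraph {T : Type*} (parent : T → T) : SimpleGraph T where
  Adj t s := t ≠ s ∧ (parent t = s ∨ parent s = t)
  symm := by constructor; intro t s h; exact ⟨h.1.symm, h.2.symm⟩
  loopless := by constructor; intro t h; exact h.1 rfl

/-- The descendants of `t` (including `t` itself). -/
def descSet {T : Type*} (parent : T → T) (t : T) : Set T :=
  {u | ∃ n : ℕ, parent^[n] u = t}

/-- `γ(t) = ⋃_{u ⪯ t} β(u)`. -/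
def gammaSet {T : Type*} (parent : T → T) (β : T → Set V) (t : T) : Set V :=
  ⋃ u ∈ descSet parent t, β u

/-- `σ(t) = ∅` for the root, `β(t) ∩ β(parent t)` otherwise. -/
def sigmaSet {T : Type*} [DecidableEq T] (root : T) (parent : T → T)
    (β : T → Set V) (t : T) : Set V :=
  if t = root then ∅ else β t ∩ β (parent t)

/-- `(T,β)` (a rooted tree given by `root` and `parent`, with bags `β`)
is a tree decomposition of `G`. -/
structure IsTreeDecomp (G : SimpleGraph V) {T : Type*} (root : T) (parent : T → T)
    (β : T → Set V) : Prop where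
  parent_root : parent root = root
  reaches_root : ∀ t : T, ∃ n : ℕ, parent^[n] t = root
  bags_connected : ∀ v : V, ((parentGraph parent).induce {t | v ∈ β t}).Connected
  edge_in_bag : ∀ u v : V, G.Adj u v → ∃ t : T, u ∈ β t ∧ v ∈ β t


private lemma walk_of_induce {G : SimpleGraph V} {W : Set V} :
    ∀ (a b : (Wᶜ : Set V)) (_ : (G.induce Wᶜ).Walk a b),
      ∃ p : G.Walk a.1 b.1, ∀ z ∈ p.support, z ∉ W := by
  intro a b q
  induction q with
  | nil =>
    rename_i u
    refine ⟨SimpleGraph.Walk.nil, ?_⟩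
    intro z hz
    simp only [SimpleGraph.Walk.support_nil, List.mem_singleton] at hz
    subst hz; exact u.2
  | cons h q ih =>
    rename_i u w _
    obtain ⟨p, hp⟩ := ih
    refine ⟨SimpleGraph.Walk.cons (by exact h) p, ?_⟩
    intro z hz
    rcases List.mem_cons.1 (show z ∈ _ :: p.support from hz) with rfl | hz
    · exact u.2
    · exact hp z hz

lemma reachAvoid_iff {G : SimpleGraph V} {W : Set V} {x y : V} :
    ReachAvoid G W x y ↔ ∃ p : G.Walk x y, ∀ z ∈ p.support, z ∉ W := by
  constructor
  · rintro ⟨hx, hy, ⟨q⟩⟩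
    exact walk_of_induce ⟨x, hx⟩ ⟨y, hy⟩ q
  · rintro ⟨p, hp⟩
    have hx : x ∈ Wᶜ := hp x p.start_mem_support
    have hy : y ∈ Wᶜ := hp y p.end_mem_support
    refine ⟨hx, hy, ?_⟩
    induction p with
    | nil => rfl
    | cons h q ih =>
      rename_i a b c
      have hb : b ∈ Wᶜ := hp b (by simp [SimpleGraph.Walk.support_cons])
      have h1 : (G.induce Wᶜ).Adj ⟨a, hx⟩ ⟨b, hb⟩ := h
      exact h1.reachable.trans
        (ih (fun z hz => hp z (by simp [SimpleGraph.Walk.support_cons, hz])) hb hy)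

lemma mem_reachSet {G : SimpleGraph V} {W X : Set V} {y : V} :
    y ∈ reachSet G W X ↔
      ∃ x ∈ X, x ∉ W ∧ ∃ p : G.Walk x y, ∀ z ∈ p.support, z ∉ W := by
  constructor
  · rintro ⟨x, hx, hr⟩
    exact ⟨x, hx.1, hx.2, reachAvoid_iff.1 hr⟩
  · rintro ⟨x, hx, hxw, p, hp⟩
    exact ⟨x, ⟨hx, hxw⟩, reachAvoid_iff.2 ⟨p, hp⟩⟩

lemma reachSet_disj {G : SimpleGraph V} {W X : Set V} {y : V}
    (h : y ∈ reachSet G W X) : y ∉ W := by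
  obtain ⟨x, hx, _, p, hp⟩ := mem_reachSet.1 h
  exact hp y p.end_mem_support

lemma diff_subset_reachSet {G : SimpleGraph V} {W X : Set V} :
    X \ W ⊆ reachSet G W X := by
  rintro x ⟨hx, hxw⟩
  exact mem_reachSet.2 ⟨x, hx, hxw, SimpleGraph.Walk.nil, by
    intro z hz
    simp only [SimpleGraph.Walk.support_nil, List.mem_singleton] at hz
    subst hz; exact hxw⟩

lemma reachSet_closed {G : SimpleGraph V} {W X : Set V} {u v : V}
    (hu : u ∈ reachSet G W X) (huv : G.Adj u v) (hv : v ∉ W) :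
    v ∈ reachSet G W X := by
  obtain ⟨x, hx, hxw, p, hp⟩ := mem_reachSet.1 hu
  refine mem_reachSet.2 ⟨x, hx, hxw, p.concat huv, ?_⟩
  intro z hz
  have hz' : z ∈ p.support ++ [v] := by
    simpa [SimpleGraph.Walk.support_concat] using hz
  rcases List.mem_append.1 hz' with hz'' | hz''
  · exact hp z hz''
  · simp only [List.mem_singleton] at hz''
    subst hz''; exact hv

/-- Least-closed-set property of `reachSet`. -/
lemma reachSet_subset {G : SimpleGraph V} {W X A : Set V}
    (hXA : X \ W ⊆ A)
    (hcl : ∀ u ∈ A, ∀ v, G.Adj u v → v ∉ W → v ∈ A) :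
    reachSet G W X ⊆ A := by
  intro y hy
  obtain ⟨x, hx, hxw, p, hp⟩ := mem_reachSet.1 hy
  have hxA : x ∈ A := hXA ⟨hx, hxw⟩
  clear hx hxw
  induction p with
  | nil => exact hxA
  | cons h q ih =>
    rename_i a b c
    have hb : b ∉ W := hp b (by simp [SimpleGraph.Walk.support_cons])
    exact ih hy (fun z hz => hp z (by simp [SimpleGraph.Walk.support_cons, hz]))
      (hcl a hxA b h hb)

/-- every vertex of the witnessing walk is itself in the reach set -/
lemma reachSet_walk_in [DecidableEq V] {G : SimpleGraph V} {W X : Set V} {y : V}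
    (hy : y ∈ reachSet G W X) :
    ∃ x ∈ X, x ∉ W ∧ ∃ p : G.Walk x y, ∀ z ∈ p.support, z ∈ reachSet G W X := by
  obtain ⟨x, hx, hxw, p, hp⟩ := mem_reachSet.1 hy
  refine ⟨x, hx, hxw, p, ?_⟩
  intro z hz
  refine mem_reachSet.2 ⟨x, hx, hxw, p.takeUntil z hz, ?_⟩
  intro w hw
  exact hp w (SimpleGraph.Walk.support_takeUntil_subset _ _ hw)

/-- transfer lemma -/
lemma reachSet_transfer [DecidableEq V] {G : SimpleGraph V} {W W' X B : Set V}
    (hRB : reachSet G W X ⊆ B) (hBW' : ∀ z ∈ B, z ∉ W') :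
    reachSet G W X ⊆ reachSet G W' X := by
  intro y hy
  obtain ⟨x, hx, _, p, hp⟩ := reachSet_walk_in hy
  refine mem_reachSet.2 ⟨x, hx, hBW' x (hRB (hp x p.start_mem_support)), p, ?_⟩
  intro z hz
  exact hBW' z (hRB (hp z hz))

lemma reachSet_mono_W [DecidableEq V] {G : SimpleGraph V} {W W' X : Set V}
    (h : W' ⊆ W) : reachSet G W X ⊆ reachSet G W' X :=
  reachSet_transfer (le_refl _) (fun z hz hz' => reachSet_disj hz (h hz'))

lemma reachSet_mono_X {G : SimpleGraph V} {W X X' : Set V}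
    (h : X ⊆ X') : reachSet G W X ⊆ reachSet G W X' := by
  rintro y ⟨x, hx, hr⟩
  exact ⟨x, ⟨h hx.1, hx.2⟩, hr⟩

lemma reachSet_union_X {G : SimpleGraph V} {W X X' : Set V} :
    reachSet G W (X ∪ X') = reachSet G W X ∪ reachSet G W X' := by
  ext y
  constructor
  · rintro ⟨x, ⟨hx | hx, hxw⟩, hr⟩
    · exact Or.inl ⟨x, ⟨hx, hxw⟩, hr⟩
    · exact Or.inr ⟨x, ⟨hx, hxw⟩, hr⟩
  · rintro (⟨x, hx, hr⟩ | ⟨x, hx, hr⟩)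
    · exact ⟨x, ⟨Or.inl hx.1, hx.2⟩, hr⟩
    · exact ⟨x, ⟨Or.inr hx.1, hx.2⟩, hr⟩

lemma reachSet_trans {G : SimpleGraph V} {W X A : Set V}
    (h : A ⊆ reachSet G W X) : reachSet G W A ⊆ reachSet G W X := by
  refine reachSet_subset (fun a ha => h ha.1) ?_
  exact fun u hu v huv hv => reachSet_closed hu huv hv

lemma isSeparator_iff {G : SimpleGraph V} {X Y W : Set V} :
    IsSeparator G X Y W ↔ ∀ y ∈ Y, y ∉ reachSet G W X := by
  constructor
  · rintro h y hy ⟨x, hx, hr⟩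
    obtain ⟨hxw', hyw, hreach⟩ := hr
    exact h x hx y ⟨hy, hyw⟩ ⟨hxw', hyw, hreach⟩
  · rintro h x hx y hy hr
    exact h y hy.1 ⟨x, hx, hr⟩

lemma setNbhd_disj {G : SimpleGraph V} {C : Set V} {v : V} (h : v ∈ setNbhd G C) :
    v ∉ C := h.1

lemma mem_of_adj_nbhd {G : SimpleGraph V} {C : Set V} {u v : V}
    (hu : u ∈ C) (huv : G.Adj u v) (hv : v ∉ setNbhd G C) : v ∈ C := by
  by_contra hvc
  exact hv ⟨hvc, u, hu, huv⟩

lemma setNbhd_reach_subset {G : SimpleGraph V} {W X : Set V} :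
    setNbhd G (reachSet G W X) ⊆ W := by
  rintro v ⟨hv, u, hu, huv⟩
  by_contra hvw
  exact hv (reachSet_closed hu huv hvw)

lemma setNbhd_submod [Fintype V] (G : SimpleGraph V) (A B : Set V) :
    (setNbhd G (A ∪ B)).ncard + (setNbhd G (A ∩ B)).ncard ≤
      (setNbhd G A).ncard + (setNbhd G B).ncard := by
  have h1 : setNbhd G (A ∪ B) ∪ setNbhd G (A ∩ B) ⊆ setNbhd G A ∪ setNbhd G B := by
    rintro v (⟨hv, u, hu, huv⟩ | ⟨hv, u, hu, huv⟩)
    · rcases hu with hu | hu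
      · exact Or.inl ⟨fun hA => hv (Or.inl hA), u, hu, huv⟩
      · exact Or.inr ⟨fun hB => hv (Or.inr hB), u, hu, huv⟩
    · by_cases hA : v ∈ A
      · exact Or.inr ⟨fun hB => hv ⟨hA, hB⟩, u, hu.2, huv⟩
      · exact Or.inl ⟨hA, u, hu.1, huv⟩
  have h2 : setNbhd G (A ∪ B) ∩ setNbhd G (A ∩ B) ⊆ setNbhd G A ∩ setNbhd G B := by
    rintro v ⟨⟨hv, _⟩, ⟨_, u, hu, huv⟩⟩
    exact ⟨⟨fun hA => hv (Or.inl hA), u, hu.1, huv⟩, ⟨fun hB => hv (Or.inr hB), u, hu.2, huv⟩⟩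
  have e1 := Set.ncard_union_add_ncard_inter (setNbhd G (A ∪ B)) (setNbhd G (A ∩ B))
  have e2 := Set.ncard_union_add_ncard_inter (setNbhd G A) (setNbhd G B)
  calc (setNbhd G (A ∪ B)).ncard + (setNbhd G (A ∩ B)).ncard
      = (setNbhd G (A ∪ B) ∪ setNbhd G (A ∩ B)).ncard
        + (setNbhd G (A ∪ B) ∩ setNbhd G (A ∩ B)).ncard := e1.symm
    _ ≤ (setNbhd G A ∪ setNbhd G B).ncard + (setNbhd G A ∩ setNbhd G B).ncard :=
        Nat.add_le_add (Set.ncard_le_ncard h1 (Set.toFinite _))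
          (Set.ncard_le_ncard h2 (Set.toFinite _))
    _ = (setNbhd G A).ncard + (setNbhd G B).ncard := e2

/-- Restricted separator: disjoint from the source side. -/
def RSep (G : SimpleGraph V) (X T W : Set V) : Prop :=
  W ∩ X = ∅ ∧ ∀ y ∈ T, y ∉ reachSet G W X

/-- Restricted important separator. -/
def RImp (G : SimpleGraph V) (X T W : Set V) : Prop :=
  RSep G X T W ∧ (∀ W' ⊆ W, RSep G X T W' → W' = W) ∧
    ∀ W' : Set V, RSep G X T W' → W'.ncard ≤ W.ncard →
      ¬ reachSet G W X ⊂ reachSet G W' X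

lemma RSep.X_subset_reach {G : SimpleGraph V} {X T W : Set V} (h : RSep G X T W) :
    X ⊆ reachSet G W X := by
  intro x hx
  refine diff_subset_reachSet ⟨hx, fun hxw => ?_⟩
  exact (Set.eq_empty_iff_forall_notMem.1 h.1 x) ⟨hxw, hx⟩

lemma RSep.not_mem_X {G : SimpleGraph V} {X T W : Set V} (h : RSep G X T W)
    {x : V} (hx : x ∈ X) : x ∉ W :=
  fun hxw => (Set.eq_empty_iff_forall_notMem.1 h.1 x) ⟨hxw, hx⟩

/-- A restricted separator that is inclusion-minimal is contained in the
neighbourhood of its reach set. -/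
lemma minimal_subset_nbhd {G : SimpleGraph V} {X T W : Set V}
    (hW : RSep G X T W) (hmin : ∀ W' ⊆ W, RSep G X T W' → W' = W)
    {w : V} (hw : w ∈ W) : w ∈ setNbhd G (reachSet G W X) := by
  by_contra hnb
  have hsub : reachSet G (W \ {w}) X ⊆ reachSet G W X := by
    refine reachSet_subset ?_ ?_
    · intro x hx
      exact diff_subset_reachSet ⟨hx.1, hW.not_mem_X hx.1⟩
    · intro u hu v huv hv
      by_cases hvW : v ∈ W
      · have : v = w := by
          by_contra hne
          exact hv ⟨hvW, by simpa using hne⟩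
        subst this
        exact absurd ⟨fun hvA => reachSet_disj hvA hvW, u, hu, huv⟩ hnb
      · exact reachSet_closed hu huv hvW
  have hRSep : RSep G X T (W \ {w}) := by
    refine ⟨?_, ?_⟩
    · apply Set.eq_empty_iff_forall_notMem.2
      rintro x ⟨⟨hxW, _⟩, hxX⟩
      exact hW.not_mem_X hxX hxW
    · intro y hy hyr
      exact hW.2 y hy (hsub hyr)
  have := hmin (W \ {w}) Set.diff_subset hRSep
  have hwmem : w ∈ W \ {w} := by rw [this]; exact hw
  simp at hwmem

/-- Pushing a separator to the boundary of a suitable set `B`. -/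
lemma pushB {G : SimpleGraph V} {X T B : Set V}
    (hXB : X ⊆ B) (hTB : ∀ y ∈ T, y ∉ B) :
    RSep G X T (setNbhd G B) ∧ reachSet G (setNbhd G B) X ⊆ B := by
  have hreach : reachSet G (setNbhd G B) X ⊆ B := by
    refine reachSet_subset (fun x hx => hXB hx.1) ?_
    exact fun u hu v huv hv => mem_of_adj_nbhd hu huv hv
  refine ⟨⟨?_, fun y hy hyr => hTB y hy (hreach hyr)⟩, hreach⟩
  apply Set.eq_empty_iff_forall_notMem.2
  rintro x ⟨hxN, hxX⟩
  exact hxN.1 (hXB hxX)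

section Uncross
variable [Fintype V] [DecidableEq V] {G : SimpleGraph V} {X T W1 W2 : Set V}

lemma uncross_union (h1 : RSep G X T W1) (h2 : RSep G X T W2) :
    RSep G X T (setNbhd G (reachSet G W1 X ∪ reachSet G W2 X)) ∧
      reachSet G (setNbhd G (reachSet G W1 X ∪ reachSet G W2 X)) X =
        reachSet G W1 X ∪ reachSet G W2 X := by
  set B := reachSet G W1 X ∪ reachSet G W2 X with hB
  have hXB : X ⊆ B := fun x hx => Or.inl (h1.X_subset_reach hx)
  have hTB : ∀ y ∈ T, y ∉ B := by
    rintro y hy (h | h)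
    · exact h1.2 y hy h
    · exact h2.2 y hy h
  obtain ⟨hrs, hsub⟩ := pushB hXB hTB
  refine ⟨hrs, le_antisymm hsub ?_⟩
  have hdis : ∀ z ∈ B, z ∉ setNbhd G B := fun z hz hzn => hzn.1 hz
  rintro y (hy | hy)
  · exact reachSet_transfer (hB ▸ Set.subset_union_left) hdis hy
  · exact reachSet_transfer (hB ▸ Set.subset_union_right) hdis hy

lemma uncross_inter (h1 : RSep G X T W1) (h2 : RSep G X T W2) :
    RSep G X T (setNbhd G (reachSet G W1 X ∩ reachSet G W2 X)) := by
  refine (pushB ?_ ?_).1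
  · exact fun x hx => ⟨h1.X_subset_reach hx, h2.X_subset_reach hx⟩
  · exact fun y hy h => h1.2 y hy h.1

lemma uncross_card (h1 : RSep G X T W1) (h2 : RSep G X T W2) :
    (setNbhd G (reachSet G W1 X ∪ reachSet G W2 X)).ncard +
      (setNbhd G (reachSet G W1 X ∩ reachSet G W2 X)).ncard ≤
        W1.ncard + W2.ncard := by
  refine (setNbhd_submod G _ _).trans (Nat.add_le_add ?_ ?_) <;>
    exact Set.ncard_le_ncard setNbhd_reach_subset (Set.toFinite _)

end Uncross

/-- `G` with the vertex `v` isolated. -/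
def delV (G : SimpleGraph V) (v : V) : SimpleGraph V where
  Adj a b := G.Adj a b ∧ a ≠ v ∧ b ≠ v
  symm := ⟨fun a b h => ⟨h.1.symm, h.2.2, h.2.1⟩⟩
  loopless := ⟨fun a h => G.loopless.irrefl a h.1⟩

lemma walk_avoid_map {V' : Type*} {G : SimpleGraph V} {G' : SimpleGraph V'} {W : Set V}
    (f : V → V')
    (hf : ∀ a b, G.Adj a b → a ∉ W → b ∉ W → G'.Adj (f a) (f b)) :
    ∀ {x y : V} (p : G.Walk x y), (∀ z ∈ p.support, z ∉ W) →
      ∃ q : G'.Walk (f x) (f y), ∀ z ∈ q.support, ∃ w ∈ p.support, f w = z := by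
  intro x y p hp
  induction p with
  | nil =>
    rename_i u
    refine ⟨SimpleGraph.Walk.nil, ?_⟩
    intro z hz
    simp only [SimpleGraph.Walk.support_nil, List.mem_singleton] at hz
    exact ⟨u, by simp, hz.symm⟩
  | cons h q ih =>
    rename_i a b c
    have ha : a ∉ W := hp a (by simp [SimpleGraph.Walk.support_cons])
    have hb : b ∉ W := hp b (by simp [SimpleGraph.Walk.support_cons])
    obtain ⟨q', hq'⟩ := ih (fun z hz => hp z (by simp [SimpleGraph.Walk.support_cons, hz]))
    refine ⟨SimpleGraph.Walk.cons (hf a b h ha hb) q', ?_⟩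
    intro z hz
    rcases List.mem_cons.1 (by simpa using hz) with rfl | hz
    · exact ⟨a, by simp [SimpleGraph.Walk.support_cons], rfl⟩
    · obtain ⟨w, hw, hfw⟩ := hq' z hz
      exact ⟨w, by simp [SimpleGraph.Walk.support_cons, hw], hfw⟩

lemma delV_support {G : SimpleGraph V} {v : V} :
    ∀ {x y : V} (p : (delV G v).Walk x y), x ≠ v → ∀ z ∈ p.support, z ≠ v := by
  intro x y p
  induction p with
  | nil =>
    intro hx z hz
    simp only [SimpleGraph.Walk.support_nil, List.mem_singleton] at hz
    subst hz; exact hx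
  | cons h q ih =>
    rename_i a b c
    intro hx z hz
    rcases List.mem_cons.1 (by simpa using hz) with rfl | hz
    · exact hx
    · have h' : G.Adj a b ∧ a ≠ v ∧ b ≠ v := h
      exact ih h'.2.2 z hz

lemma reach_delV {G : SimpleGraph V} {v : V} {U X : Set V} (hvX : v ∉ X) :
    reachSet (delV G v) U X = reachSet G (U ∪ {v}) X := by
  ext y
  constructor
  · intro hy
    obtain ⟨x, hx, hxU, p, hp⟩ := mem_reachSet.1 hy
    have hxv : x ≠ v := fun h => hvX (h ▸ hx)
    have hav : ∀ z ∈ p.support, z ∉ U ∪ {v} := by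
      rintro z hz (h | h)
      · exact hp z hz h
      · exact delV_support p hxv z hz (by simpa using h)
    obtain ⟨q, hq⟩ := walk_avoid_map (G := delV G v) (G' := G) (W := U ∪ {v}) id
      (fun a b h _ _ => h.1) p hav
    refine mem_reachSet.2 ⟨x, hx, hav x p.start_mem_support, q, ?_⟩
    intro z hz
    obtain ⟨w, hw, rfl⟩ := hq z hz
    exact hav w hw
  · intro hy
    obtain ⟨x, hx, hxU, p, hp⟩ := mem_reachSet.1 hy
    obtain ⟨q, hq⟩ := walk_avoid_map (G := G) (G' := delV G v) (W := U ∪ {v}) id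
      (fun a b h ha hb => ⟨h, fun h' => ha (Or.inr h'), fun h' => hb (Or.inr h')⟩) p hp
    refine mem_reachSet.2 ⟨x, hx, fun h => hxU (Or.inl h), q, ?_⟩
    intro z hz
    obtain ⟨w, hw, rfl⟩ := hq z hz
    exact fun h => hp w hw (Or.inl h)

theorem aux_bound [Fintype V] [DecidableEq V] (m : ℕ) :
    ∀ (G : SimpleGraph V) (X T : Set V) (k l : ℕ),
      (∀ U, RSep G X T U → l ≤ U.ncard) → 2 * k ≤ m + l →
      {W : Set V | RImp G X T W ∧ W.ncard ≤ k}.ncard ≤ 2 ^ m := by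
  induction m using Nat.strong_induction_on with
  | _ m IH =>
  intro G X T k l hl hkl
  by_cases hex : ∃ U, RSep G X T U
  swap
  · have : {W : Set V | RImp G X T W ∧ W.ncard ≤ k} = ∅ := by
      apply Set.eq_empty_iff_forall_notMem.2
      rintro W ⟨hW, _⟩
      exact hex ⟨W, hW.1⟩
    rw [this]
    simp
  obtain ⟨U0, hU0⟩ := hex
  -- minimum-size separator
  obtain ⟨W1, hW1, hW1min⟩ := Set.exists_min_image {U | RSep G X T U}
    (fun U => U.ncard) (Set.toFinite _) ⟨U0, hU0⟩
  -- among minimum size, maximize reach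
  obtain ⟨Wstar, hWstarM, hWstarmax⟩ := Set.exists_max_image
    {U | RSep G X T U ∧ U.ncard = W1.ncard} (fun U => (reachSet G U X).ncard)
    (Set.toFinite _) ⟨W1, hW1, rfl⟩
  obtain ⟨hWstar, hWstarcard⟩ := hWstarM
  set lam := Wstar.ncard with hlam
  have hmin : ∀ U, RSep G X T U → lam ≤ U.ncard := by
    intro U hU; exact le_trans (le_of_eq hWstarcard) (hW1min U hU)
  have hllam : l ≤ lam := hl Wstar hWstar
  set Rstar := reachSet G Wstar X with hRstar
  -- trivial case: empty separator
  by_cases hlam0 : lam = 0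
  · have hWe : Wstar = ∅ := by
      apply (Set.ncard_eq_zero (Set.toFinite Wstar)).1
      exact hlam0
    have hsub : {W : Set V | RImp G X T W ∧ W.ncard ≤ k} ⊆ {(∅ : Set V)} := by
      rintro W ⟨hW, -⟩
      have hWe' : RSep G X T (∅ : Set V) := hWe ▸ hWstar
      have := hW.2.1 ∅ (Set.empty_subset W) hWe'
      simp [← this]
    calc {W : Set V | RImp G X T W ∧ W.ncard ≤ k}.ncard
        ≤ ({(∅ : Set V)} : Set (Set V)).ncard :=
          Set.ncard_le_ncard hsub (Set.toFinite _)
      _ = 1 := Set.ncard_singleton _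
      _ ≤ 2 ^ m := Nat.one_le_two_pow
  -- main branching case
  -- if k < lam nothing to count
  by_cases hklam : k < lam
  · have : {W : Set V | RImp G X T W ∧ W.ncard ≤ k} = ∅ := by
      apply Set.eq_empty_iff_forall_notMem.2
      rintro W ⟨hW, hWk⟩
      exact absurd (hmin W hW.1) (by omega)
    rw [this]; simp
  push_neg at hklam
  have hlam1 : 1 ≤ lam := Nat.one_le_iff_ne_zero.2 hlam0
  have hk1 : 1 ≤ k := le_trans hlam1 hklam
  have hm1 : 1 ≤ m := by omega
  have hkmlam : 2 * k ≤ m + lam := by omega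
  -- pick a branching vertex
  have hWstarne : Wstar.Nonempty := Set.nonempty_of_ncard_ne_zero hlam0
  obtain ⟨v, hv⟩ := hWstarne
  have hWstarMin : ∀ W' ⊆ Wstar, RSep G X T W' → W' = Wstar := by
    intro W' hsub hsep
    exact Set.eq_of_subset_of_ncard_le hsub (hmin W' hsep) (Set.toFinite _)
  have hvnb : v ∈ setNbhd G Rstar := minimal_subset_nbhd hWstar hWstarMin hv
  obtain ⟨hvR, u, hu, huv⟩ := hvnb
  have hvX : v ∉ X := fun h => hWstar.not_mem_X h hv
  -- domination lemma
  have hdom : ∀ W, RImp G X T W → Rstar ⊆ reachSet G W X := by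
    intro W hW
    by_contra hns
    have h1 := uncross_union hWstar hW.1
    have h2 := uncross_inter hWstar hW.1
    have hcard := uncross_card hWstar hW.1
    rw [← hRstar] at h1 h2 hcard
    have hWi := hmin _ h2
    have hWu : (setNbhd G (Rstar ∪ reachSet G W X)).ncard ≤ W.ncard := by omega
    refine hW.2.2 _ h1.1 hWu ?_
    rw [h1.2]
    constructor
    · exact Set.subset_union_right
    · intro hle
      exact hns (fun z hz => hle (Or.inl hz))
  -- maximal-reach lemma
  have hmax : ∀ U, RSep G X T U → U.ncard ≤ lam → reachSet G U X ⊆ Rstar := by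
    intro U hU hUcard
    have h1 := uncross_union hWstar hU
    have h2 := uncross_inter hWstar hU
    have hcard := uncross_card hWstar hU
    rw [← hRstar] at h1 h2 hcard
    have hWi := hmin _ h2
    have hWu : (setNbhd G (Rstar ∪ reachSet G U X)).ncard ≤ lam := by omega
    have hWueq : (setNbhd G (Rstar ∪ reachSet G U X)).ncard = W1.ncard := by
      have := hmin _ h1.1
      omega
    have hmaxapp := hWstarmax _ ⟨h1.1, hWueq⟩
    rw [h1.2] at hmaxapp
    have : Rstar ∪ reachSet G U X = Rstar :=
      (Set.eq_of_subset_of_ncard_le Set.subset_union_left hmaxapp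
        (Set.toFinite _)).symm
    rw [← this]
    exact Set.subset_union_right
  -- branch 1 : separators containing v
  have hd1 : ∀ U : Set V, RSep (delV G v) X T U → RSep G X T (U ∪ {v}) := by
    intro U hU
    constructor
    · apply Set.eq_empty_iff_forall_notMem.2
      rintro x ⟨hxU | hxv, hxX⟩
      · exact hU.not_mem_X hxX hxU
      · exact hvX (by simpa using hxv ▸ hxX)
    · intro y hy
      rw [← reach_delV hvX]
      exact hU.2 y hy
  have hd2 : ∀ W : Set V, RSep G X T W → v ∈ W → RSep (delV G v) X T (W \ {v}) := by
    intro W hW hvW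
    constructor
    · apply Set.eq_empty_iff_forall_notMem.2
      rintro x ⟨⟨hxW, -⟩, hxX⟩
      exact hW.not_mem_X hxX hxW
    · intro y hy
      rw [reach_delV hvX, Set.diff_union_self, Set.union_eq_self_of_subset_right
        (Set.singleton_subset_iff.2 hvW)]
      exact hW.2 y hy
  have hreachdel : ∀ W : Set V, v ∈ W →
      reachSet (delV G v) (W \ {v}) X = reachSet G W X := by
    intro W hvW
    rw [reach_delV hvX, Set.diff_union_self, Set.union_eq_self_of_subset_right
      (Set.singleton_subset_iff.2 hvW)]
  have hbr1 : ∀ W, RImp G X T W → W.ncard ≤ k → v ∈ W →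
      RImp (delV G v) X T (W \ {v}) ∧ (W \ {v}).ncard ≤ k - 1 := by
    intro W hW hWk hvW
    have hWcard1 : 1 ≤ W.ncard := (Set.ncard_pos (Set.toFinite W)).2 ⟨v, hvW⟩
    have hdcard : (W \ {v}).ncard = W.ncard - 1 :=
      Set.ncard_diff_singleton_of_mem hvW
    refine ⟨⟨hd2 W hW.1 hvW, ?_, ?_⟩, by omega⟩
    · intro U' hsub hsep
      have h1 := hd1 U' hsep
      have h2 : U' ∪ {v} ⊆ W := by
        apply Set.union_subset (hsub.trans Set.diff_subset)
        simpa using hvW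
      have h3 := hW.2.1 _ h2 h1
      have hvU' : v ∉ U' := fun h => (hsub h).2 rfl
      rw [← h3]
      ext z
      simp only [Set.mem_diff, Set.mem_union, Set.mem_singleton_iff]
      constructor
      · intro hz
        exact ⟨Or.inl hz, fun h => hvU' (h ▸ hz)⟩
      · rintro ⟨hz | rfl, hzv⟩
        · exact hz
        · exact absurd rfl hzv

    · intro U'' hsep hcard hss
      rw [hreachdel W hvW] at hss
      have h1 := hd1 U'' hsep
      have h2 : (U'' ∪ {v}).ncard ≤ W.ncard := by
        have := Set.ncard_union_le U'' {v}
        rw [Set.ncard_singleton] at this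
        omega
      refine hW.2.2 _ h1 h2 ?_
      rw [← reach_delV hvX]
      exact hss
    -- branch 2 : separators avoiding v
  set X' : Set V := X ∪ (Rstar ∪ {v}) with hX'
  have hXX' : X ⊆ X' := Set.subset_union_left
  have hRSepX : ∀ U : Set V, RSep G X' T U → RSep G X T U := by
    intro U hU
    constructor
    · apply Set.eq_empty_iff_forall_notMem.2
      rintro x ⟨hxU, hxX⟩
      exact hU.not_mem_X (hXX' hxX) hxU
    · intro y hy hyr
      exact hU.2 y hy (reachSet_mono_X hXX' hyr)
  have hbr2 : ∀ W, RImp G X T W → W.ncard ≤ k → v ∉ W → RImp G X' T W := by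
    intro W hW hWk hvW
    have hRd := hdom W hW
    have hvRW : v ∈ reachSet G W X := reachSet_closed (hRd hu) huv hvW
    have hX'R : X' ⊆ reachSet G W X := by
      rintro z (hz | hz | hz)
      · exact hW.1.X_subset_reach hz
      · exact hRd hz
      · exact (Set.mem_singleton_iff.1 hz) ▸ hvRW
    have hreq : reachSet G W X' = reachSet G W X := by
      apply le_antisymm
      · rw [hX', reachSet_union_X]
        exact Set.union_subset (le_refl _) (reachSet_trans (fun z hz => hX'R (Or.inr hz)))
      · exact reachSet_mono_X hXX'
    have hWsep' : RSep G X' T W := by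
      constructor
      · apply Set.eq_empty_iff_forall_notMem.2
        rintro z ⟨hzW, hzX'⟩
        exact reachSet_disj (hX'R hzX') hzW
      · intro y hy
        rw [hreq]
        exact hW.1.2 y hy
    refine ⟨hWsep', ?_, ?_⟩
    · intro U' hsub hsep
      exact hW.2.1 U' hsub (hRSepX U' hsep)
    · intro U'' hsep hcard hss
      rw [hreq] at hss
      have hRU : reachSet G W X ⊆ reachSet G U'' X := by
        refine reachSet_transfer (le_refl _) ?_
        intro z hz hzU
        exact reachSet_disj (hss.1 hz) hzU
      have hreq2 : reachSet G U'' X' = reachSet G U'' X := by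
        apply le_antisymm
        · rw [hX', reachSet_union_X]
          refine Set.union_subset (le_refl _) (reachSet_trans ?_)
          intro z hz
          exact hRU (hX'R (Or.inr hz))
        · exact reachSet_mono_X hXX'
      rw [hreq2] at hss
      exact hW.2.2 U'' (hRSepX U'' hsep) hcard hss
  -- lower bound for separators of the enlarged instance
  have hl2 : ∀ U, RSep G X' T U → lam + 1 ≤ U.ncard := by
    intro U hU
    by_contra hlt
    push_neg at hlt
    have hUlam : U.ncard ≤ lam := by omega
    set B := reachSet G U X' with hB
    have hXB : X ⊆ B := fun z hz => hU.X_subset_reach (hXX' hz)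
    have hTB : ∀ y ∈ T, y ∉ B := hU.2
    obtain ⟨hWbsep, hWbsub⟩ := pushB (G := G) hXB hTB
    have hWbU : setNbhd G B ⊆ U := setNbhd_reach_subset
    have hWbcard : (setNbhd G B).ncard ≤ lam :=
      le_trans (Set.ncard_le_ncard hWbU (Set.toFinite _)) hUlam
    have hWbR := hmax _ hWbsep hWbcard
    have hdisB : ∀ z ∈ B, z ∉ setNbhd G B := fun z hz hzn => hzn.1 hz
    have hRstarB : Rstar ⊆ B := by
      intro z hz
      exact hU.X_subset_reach (Or.inr (Or.inl hz))
    have hRstarWb : Rstar ⊆ reachSet G (setNbhd G B) X := by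
      rw [hRstar]
      exact reachSet_transfer (hRstar ▸ hRstarB) hdisB
    have hvWb : v ∉ setNbhd G B :=
      hdisB v (hU.X_subset_reach (Or.inr (Or.inr rfl)))
    have hvB : v ∈ reachSet G (setNbhd G B) X :=
      reachSet_closed (hRstarWb hu) huv hvWb
    exact hvR (hWbR hvB)
  -- apply induction hypothesis to both branches
  have hIH1 := IH (m - 1) (by omega) (delV G v) X T (k - 1) (lam - 1)
    (by
      intro U hU
      have h1 := hmin _ (hd1 U hU)
      have h2 := Set.ncard_union_le U {v}
      rw [Set.ncard_singleton] at h2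
      omega)
    (by omega)
  have hIH2 := IH (m - 1) (by omega) G X' T k (lam + 1) hl2 (by omega)
  -- combine
  have hsplit : {W : Set V | RImp G X T W ∧ W.ncard ≤ k} ⊆
      {W : Set V | RImp G X T W ∧ W.ncard ≤ k ∧ v ∈ W} ∪
      {W : Set V | RImp G X T W ∧ W.ncard ≤ k ∧ v ∉ W} := by
    rintro W ⟨hW, hWk⟩
    by_cases hvW : v ∈ W
    · exact Or.inl ⟨hW, hWk, hvW⟩
    · exact Or.inr ⟨hW, hWk, hvW⟩
  have hc1 : {W : Set V | RImp G X T W ∧ W.ncard ≤ k ∧ v ∈ W}.ncard ≤ 2 ^ (m - 1) := by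
    refine le_trans (Set.ncard_le_ncard_of_injOn (fun W => W \ {v}) ?_ ?_ (Set.toFinite _)) hIH1
    · rintro W ⟨hW, hWk, hvW⟩
      exact ⟨(hbr1 W hW hWk hvW).1, (hbr1 W hW hWk hvW).2⟩
    · rintro W ⟨-, -, hvW⟩ W' ⟨-, -, hvW'⟩ h
      have h' : W \ {v} = W' \ {v} := h
      have : W \ {v} ∪ {v} = W' \ {v} ∪ {v} := by rw [h']
      rwa [Set.diff_union_self, Set.diff_union_self,
        Set.union_eq_self_of_subset_right (Set.singleton_subset_iff.2 hvW),
        Set.union_eq_self_of_subset_right (Set.singleton_subset_iff.2 hvW')] at this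
  have hc2 : {W : Set V | RImp G X T W ∧ W.ncard ≤ k ∧ v ∉ W}.ncard ≤ 2 ^ (m - 1) := by
    refine le_trans (Set.ncard_le_ncard ?_ (Set.toFinite _)) hIH2
    rintro W ⟨hW, hWk, hvW⟩
    exact ⟨hbr2 W hW hWk hvW, hWk⟩
  calc {W : Set V | RImp G X T W ∧ W.ncard ≤ k}.ncard
      ≤ ({W : Set V | RImp G X T W ∧ W.ncard ≤ k ∧ v ∈ W} ∪
        {W : Set V | RImp G X T W ∧ W.ncard ≤ k ∧ v ∉ W}).ncard :=
        Set.ncard_le_ncard hsplit (Set.toFinite _)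
    _ ≤ {W : Set V | RImp G X T W ∧ W.ncard ≤ k ∧ v ∈ W}.ncard +
        {W : Set V | RImp G X T W ∧ W.ncard ≤ k ∧ v ∉ W}.ncard :=
        Set.ncard_union_le _ _
    _ ≤ 2 ^ (m - 1) + 2 ^ (m - 1) := Nat.add_le_add hc1 hc2
    _ = 2 ^ m := by
        rw [← two_mul, ← pow_succ']
        congr 1
        omega

section Gadget

variable [Fintype V] [DecidableEq V]

/-- The gadget graph: `G` plus `n` pendant copies of every vertex of `S`. -/
def gadget (G : SimpleGraph V) (S : Set V) (n : ℕ) : SimpleGraph (V ⊕ V × Fin n) where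
  Adj a b :=
    match a, b with
    | Sum.inl a, Sum.inl b => G.Adj a b
    | Sum.inl a, Sum.inr (x, _) => a = x ∧ x ∈ S
    | Sum.inr (x, _), Sum.inl b => b = x ∧ x ∈ S
    | Sum.inr _, Sum.inr _ => False
  symm := by
    constructor
    rintro (a | ⟨x, i⟩) (b | ⟨y, j⟩) h
    · exact h.symm
    · exact h
    · exact h
    · exact h
  loopless := by
    constructor
    rintro (a | ⟨x, i⟩) h
    · exact G.loopless.irrefl a h
    · exact h

variable {G : SimpleGraph V} {S T : Set V} {n : ℕ}

/-- the source set in the gadget -/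
def gX (S : Set V) (n : ℕ) : Set (V ⊕ V × Fin n) :=
  {w | ∃ x ∈ S, ∃ i : Fin n, w = Sum.inr (x, i)}

lemma gadget_reach (Wg : Set (V ⊕ V × Fin n))
    (hfree : ∀ x ∈ S, ∃ i : Fin n, Sum.inr (x, i) ∉ Wg) :
    reachSet (gadget G S n) Wg (gX S n) =
      (gX S n \ Wg) ∪ Sum.inl '' reachSet G (Sum.inl ⁻¹' Wg) S := by
  apply le_antisymm
  · refine reachSet_subset (fun z hz => Or.inl hz) ?_
    rintro b (⟨⟨x, hxS, i, rfl⟩, hbW⟩ | ⟨u, hu, rfl⟩) c hadj hcW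
    · rcases c with y | ⟨y, j⟩
      · have h : y = x ∧ x ∈ S := hadj
        exact Or.inr ⟨y, diff_subset_reachSet ⟨by rw [h.1]; exact hxS, hcW⟩, rfl⟩
      · exact absurd hadj id
    · rcases c with y | ⟨y, j⟩
      · have h : G.Adj u y := hadj
        exact Or.inr ⟨y, reachSet_closed hu h hcW, rfl⟩
      · have h : u = y ∧ y ∈ S := hadj
        exact Or.inl ⟨⟨y, h.2, j, rfl⟩, hcW⟩
  · rintro z (hz | ⟨w, hw, rfl⟩)
    · exact diff_subset_reachSet hz
    · obtain ⟨s0, hsS, hsU, p, hp⟩ := mem_reachSet.1 hw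
      obtain ⟨i, hi⟩ := hfree s0 hsS
      obtain ⟨q, hq⟩ := walk_avoid_map (G := G) (G' := gadget G S n)
        (W := Sum.inl ⁻¹' Wg) Sum.inl (fun a b h _ _ => h) p hp
      have hadj0 : (gadget G S n).Adj (Sum.inr (s0, i)) (Sum.inl s0) := ⟨rfl, hsS⟩
      refine mem_reachSet.2 ⟨Sum.inr (s0, i), ⟨s0, hsS, i, rfl⟩, hi,
        SimpleGraph.Walk.cons hadj0 q, ?_⟩
      intro z hz
      rcases List.mem_cons.1 (by simpa using hz) with rfl | hz
      · exact hi
      · obtain ⟨w', hw', rfl⟩ := hq z hz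
        exact hp w' hw'

end Gadget


/-- there are at most `4^k` important `S–T` separators of size
at most `k` (Lemma 2.3). -/
theorem important_separators_card_le {V : Type*} [Fintype V] [DecidableEq V]
    (G : SimpleGraph V) (S T : Set V) (k : ℕ) :
    {W : Set V | IsImportantSeparator G S T W ∧ W.ncard ≤ k}.ncard
      ≤ 4 ^ k := by
  classical
  set n := k + 1 with hn
  set Gg := gadget G S n with hGg
  set Xg := gX S n with hXg
  set Tg := (Sum.inl '' T : Set (V ⊕ V × Fin n)) with hTg
  have hpre : ∀ U : Set V,
      (Sum.inl ⁻¹' ((Sum.inl '' U : Set (V ⊕ V × Fin n))) : Set V) = U :=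
    fun U => Set.preimage_image_eq U Sum.inl_injective
  have hXg_inr : ∀ (x : V), (Sum.inl x : V ⊕ V × Fin n) ∉ Xg := by
    rintro x ⟨y, hy, i, h⟩
    exact absurd h (by simp)
  -- separator transfer for pure `inl` sets, from the gadget reach formula
  have hsep_transfer : ∀ W2 : Set (V ⊕ V × Fin n),
      (∀ x ∈ S, ∃ i : Fin n, Sum.inr (x, i) ∉ W2) →
      RSep Gg Xg Tg W2 → IsSeparator G S T (Sum.inl ⁻¹' W2) := by
    intro W2 hfree hsep
    rw [isSeparator_iff]
    intro t ht htr
    refine hsep.2 (Sum.inl t) ⟨t, ht, rfl⟩ ?_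
    rw [hGg, hXg, gadget_reach W2 hfree]
    exact Or.inr ⟨t, htr, rfl⟩
  have key : ∀ W : Set V, IsImportantSeparator G S T W → W.ncard ≤ k →
      RImp Gg Xg Tg (Sum.inl '' W) ∧ (Sum.inl '' W : Set (V ⊕ V × Fin n)).ncard ≤ k := by
    intro W hW hWk
    have hfreeW : ∀ x ∈ S, ∃ i : Fin n, Sum.inr (x, i) ∉ (Sum.inl '' W : Set (V ⊕ V × Fin n)) := by
      intro x hx
      exact ⟨⟨0, by omega⟩, by rintro ⟨w, -, h⟩; exact absurd h (by simp)⟩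
    have hWg_reach : reachSet Gg (Sum.inl '' W) Xg =
        Xg ∪ Sum.inl '' reachSet G W S := by
      rw [hGg, hXg, gadget_reach _ hfreeW, hpre]
      congr 1
      refine le_antisymm Set.diff_subset (fun z hz => ⟨hz, ?_⟩)
      obtain ⟨y, hy, i, rfl⟩ := hz
      rintro ⟨w, -, h⟩
      exact absurd h (by simp)
    have hncW : (Sum.inl '' W : Set (V ⊕ V × Fin n)).ncard = W.ncard :=
      Set.ncard_image_of_injective W Sum.inl_injective
    have hWgsep : RSep Gg Xg Tg (Sum.inl '' W) := by
      constructor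
      · apply Set.eq_empty_iff_forall_notMem.2
        rintro z ⟨⟨w, -, rfl⟩, hz⟩
        exact hXg_inr w hz
      · rintro y ⟨t, ht, rfl⟩ hyr
        rw [hWg_reach] at hyr
        rcases hyr with hyr | ⟨z, hz, hzz⟩
        · exact hXg_inr t hyr
        · rw [Sum.inl.injEq] at hzz
          exact (isSeparator_iff.1 hW.1) t ht (hzz ▸ hz)
    refine ⟨⟨hWgsep, ?_, ?_⟩, by rw [hncW]; exact hWk⟩
    · -- minimality
      intro W1 hsub hsep1
      have hW1eq : W1 = Sum.inl '' (Sum.inl ⁻¹' W1) := by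
        apply le_antisymm
        · intro z hz
          obtain ⟨w, -, rfl⟩ := hsub hz
          exact ⟨w, hz, rfl⟩
        · exact Set.image_preimage_subset _ _
      have hfree1 : ∀ x ∈ S, ∃ i : Fin n, Sum.inr (x, i) ∉ W1 := by
        intro x hx
        refine ⟨⟨0, by omega⟩, fun h => ?_⟩
        obtain ⟨w, -, hw⟩ := hsub h
        exact absurd hw (by simp)
      have hU1sub : Sum.inl ⁻¹' W1 ⊆ W := by
        intro z hz
        obtain ⟨w, hw, hww⟩ := hsub hz
        rw [Sum.inl.injEq] at hww
        exact hww ▸ hw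
      have := hW.2.1 (Sum.inl ⁻¹' W1) hU1sub (hsep_transfer W1 hfree1 hsep1)
      rw [hW1eq, this]
    · -- importance
      intro W2 hsep2 hcard2 hss
      have hfree2 : ∀ x ∈ S, ∃ i : Fin n, Sum.inr (x, i) ∉ W2 := by
        intro x hx
        by_contra hcon
        push_neg at hcon
        have himg : (fun i : Fin n => (Sum.inr (x, i) : V ⊕ V × Fin n)) '' Set.univ ⊆ W2 := by
          rintro z ⟨i, -, rfl⟩
          exact hcon i
        have hcard3 : n ≤ W2.ncard := by
          have h1 := Set.ncard_le_ncard himg (Set.toFinite _)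
          rwa [Set.ncard_image_of_injective _ (fun i j h => by
              simpa using h), Set.ncard_univ, Nat.card_eq_fintype_card,
            Fintype.card_fin] at h1
        rw [hncW] at hcard2
        omega
      set U2 := (Sum.inl ⁻¹' W2 : Set V) with hU2
      have hU2card : U2.ncard ≤ W.ncard := by
        have h1 : Sum.inl '' U2 ⊆ W2 := Set.image_preimage_subset _ _
        have h2 := Set.ncard_le_ncard h1 (Set.toFinite _)
        rw [Set.ncard_image_of_injective _ Sum.inl_injective] at h2
        rw [hncW] at hcard2
        omega
      have hW2reach : reachSet Gg W2 Xg = (Xg \ W2) ∪ Sum.inl '' reachSet G U2 S := by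
        rw [hGg, hXg, gadget_reach W2 hfree2]
      have hsubR : reachSet G W S ⊆ reachSet G U2 S := by
        intro z hz
        have h1 : (Sum.inl z : V ⊕ V × Fin n) ∈ reachSet Gg W2 Xg := by
          apply hss.1
          rw [hWg_reach]
          exact Or.inr ⟨z, hz, rfl⟩
        rw [hW2reach] at h1
        rcases h1 with h1 | ⟨w, hw, hww⟩
        · exact absurd h1.1 (hXg_inr z)
        · rw [Sum.inl.injEq] at hww
          exact hww ▸ hw
      obtain ⟨g, hgW2, hgW⟩ := Set.exists_of_ssubset hss
      have hgz : ∃ z, z ∈ reachSet G U2 S ∧ z ∉ reachSet G W S := by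
        rw [hW2reach] at hgW2
        rcases hgW2 with ⟨h1, -⟩ | ⟨z, hz, rfl⟩
        · exact absurd (by rw [hWg_reach]; exact Or.inl h1) hgW
        · refine ⟨z, hz, fun hcon => hgW ?_⟩
          rw [hWg_reach]
          exact Or.inr ⟨z, hcon, rfl⟩
      obtain ⟨z, hz1, hz2⟩ := hgz
      exact hW.2.2 U2 (hsep_transfer W2 hfree2 hsep2) hU2card
        ⟨hsubR, fun hcon => hz2 (hcon hz1)⟩
  -- counting via the injection `W ↦ inl '' W`
  have hle : {W : Set V | IsImportantSeparator G S T W ∧ W.ncard ≤ k}.ncard ≤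
      {Wg : Set (V ⊕ V × Fin n) | RImp Gg Xg Tg Wg ∧ Wg.ncard ≤ k}.ncard := by
    refine Set.ncard_le_ncard_of_injOn (fun W => Sum.inl '' W) ?_ ?_ (Set.toFinite _)
    · rintro W ⟨hW, hWk⟩
      exact key W hW hWk
    · rintro W - W' - h
      exact Set.image_injective.2 Sum.inl_injective h
  refine hle.trans ?_
  have := aux_bound (2 * k) Gg Xg Tg k 0 (fun U _ => Nat.zero_le _) (by omega)
  refine this.trans ?_
  rw [pow_mul]
  norm_num
end

section
/- Let G be a finite simple graph and k a nonnegative integer. Then there exists a set of edges E₀ ⊆ E(G) with |E₀| ≤ (k+1)·(|V(G)| − 1) such that for every edge uv ∈ E(G) ∖ E₀, the spanning subgraph (V(G), E₀) contains at least k+1 pairwise edge-disjoint paths between u and v. -/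
open SimpleGraph

variable {V : Type*}

section NIAux

open Finset SimpleGraph.Walk

lemma forest_edge_bound {V : Type*} [Fintype V] [DecidableEq V]
    {G : SimpleGraph V} (hG : G.IsAcyclic) :
    G.edgeSet.ncard ≤ Fintype.card V - 1 := by
  classical
  cases isEmpty_or_nonempty V with
  | inl h => simp [Set.eq_empty_of_isEmpty G.edgeSet]
  | inr h =>
  set root : V → V := fun v => Quot.out (G.connectedComponentMk v) with hroot
  have h_out : ∀ v, root (root v) = root v := by
    intro v
    simp only [hroot]
    congr 1
    exact Quot.out_eq _
  have h_reach : ∀ v, G.Reachable v (root v) := fun v =>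
    ConnectedComponent.exact (Quot.out_eq _).symm
  have h_adj_root : ∀ {x y : V}, G.Adj x y → root x = root y := by
    intro x y hxy
    simp only [hroot]
    congr 1
    exact ConnectedComponent.sound hxy.reachable
  have hEU : ∀ v, ∃! p : G.Walk v (root v), p.IsPath := by
    intro v
    refine ⟨((h_reach v).some.toPath : G.Path v (root v)), ((h_reach v).some.toPath).2, ?_⟩
    intro p hp
    exact Subtype.ext_iff.mp (hG.path_unique ⟨p, hp⟩ (h_reach v).some.toPath)
  choose f hf hf' using hEU
  set W : Set V := {w | w ≠ root w} with hW
  set m : V → Sym2 V := fun w => s(w, (f w).getVert 1) with hm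
  have hnil : ∀ w ∈ W, ¬ (f w).Nil := fun w hw => not_nil_of_ne hw
  -- injectivity
  have hinj : Set.InjOn m W := by
    have main : ∀ a ∈ W, ∀ b ∈ W, m a = m b → (f a).length ≤ (f b).length → a = b := by
      intro a ha b hb hab h'
      rw [hm, Sym2.eq_iff] at hab
      obtain (⟨h1, -⟩ | ⟨h1, h2⟩) := hab
      · exact h1
      -- h2 : (f a).getVert 1 = b, h1 : a = (f b).getVert 1
      · by_contra hne
        have hr : root a = root b :=
          h_adj_root (h2 ▸ (show G.Adj a ((f a).getVert 1) from Walk.adj_snd (hnil a ha)))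
        have h3 := hf' b (((f a).tail).copy h2 hr) (by
          simpa using (hf a).tail)
        have h4 := congrArg Walk.length h3
        rw [length_copy] at h4
        have h5 := length_tail_add_one (hnil a ha)
        omega
    intro a ha b hb hab
    rcases le_total (f a).length (f b).length with h' | h'
    · exact main a ha b hb hab h'
    · exact (main b hb a ha hab.symm h').symm
  -- surjectivity onto edges
  have hsurj : G.edgeSet ⊆ m '' W := by
    have main : ∀ x y : V, G.Adj x y → (f x).length ≤ (f y).length → s(x,y) ∈ m '' W := by
      intro x y he h'
      have hr : root x = root y := h_adj_root he
      have hyW : y ∈ W := by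
        intro hy
        -- hy : y = root y
        have h0 : (f y).length = 0 := by
          have := hf' y (Walk.nil.copy rfl hy) (by simp)
          rw [← this, length_copy, length_nil]
        have h1 : (f x).length = 1 := by
          have := hf' x ((Walk.cons he Walk.nil).copy rfl (hy.trans hr.symm))
            (by simp [he.ne])
          rw [← this, length_copy]
          simp
        omega
      have hynotsup : y ∉ (f x).support := by
        intro hy
        have ht : ((f x).takeUntil y hy) = Walk.cons he Walk.nil := by
          have := hG.path_unique ⟨(f x).takeUntil y hy, (hf x).takeUntil hy⟩
            ⟨Walk.cons he Walk.nil, by simp [he.ne]⟩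
          exact Subtype.ext_iff.mp this
        have hd := hf' y (((f x).dropUntil y hy).copy rfl hr) (by
          simpa using (hf x).dropUntil hy)
        have hspec := congrArg Walk.length ((f x).take_spec hy)
        rw [length_append, ht] at hspec
        have hd' := congrArg Walk.length hd
        rw [length_copy] at hd'
        simp at hspec
        omega
      have hq := hf' y ((Walk.cons he.symm (f x)).copy rfl hr) (by
        simpa [cons_isPath_iff] using ⟨hf x, hynotsup⟩)
      refine ⟨y, hyW, ?_⟩
      have hgv : (f y).getVert 1 = x := by
        rw [← hq, getVert_copy]
        simp
      show s(y, (f y).getVert 1) = s(x, y)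
      rw [hgv, Sym2.eq_swap]
    rw [Set.subset_def]
    intro e he
    induction e using Sym2.ind with | _ x y =>
    rw [SimpleGraph.mem_edgeSet] at he
    rcases le_total (f x).length (f y).length with h' | h'
    · exact main x y he h'
    · exact Sym2.eq_swap ▸ main y x he.symm h'
  -- counting
  have hWfin : W.Finite := Set.toFinite _
  have hWcard : W.ncard ≤ Fintype.card V - 1 := by
    have hsub : W ⊆ ({root (Classical.arbitrary V)}ᶜ : Set V) := by
      intro w hw
      simp only [Set.mem_compl_iff, Set.mem_singleton_iff]
      rintro rfl
      exact hw (h_out _).symm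
    calc W.ncard ≤ ({root (Classical.arbitrary V)}ᶜ : Set V).ncard :=
          Set.ncard_le_ncard hsub (Set.toFinite _)
    _ = Fintype.card V - 1 := by
          have h1 := Set.ncard_add_ncard_compl ({root (Classical.arbitrary V)} : Set V)
          rw [Set.ncard_singleton, Nat.card_eq_fintype_card] at h1
          omega
  calc G.edgeSet.ncard ≤ (m '' W).ncard := Set.ncard_le_ncard hsurj (Set.toFinite _)
  _ = W.ncard := Set.ncard_image_of_injOn hinj
  _ ≤ Fintype.card V - 1 := hWcard

lemma acyclic_insert {V : Type*} {F : Set (Sym2 V)} {u v : V}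
    (hG : (fromEdgeSet F).IsAcyclic) (huv : u ≠ v)
    (hnr : ¬ (fromEdgeSet F).Reachable u v) :
    (fromEdgeSet (insert s(u,v) F)).IsAcyclic := by
  classical
  set G := fromEdgeSet F with hGdef
  set G' := fromEdgeSet (insert s(u,v) F) with hG'def
  have hedge : G'.edgeSet ⊆ insert s(u,v) G.edgeSet := by
    rw [hG'def, hGdef, edgeSet_fromEdgeSet, edgeSet_fromEdgeSet]
    intro e he
    rcases he with ⟨he1, he2⟩
    rcases Set.mem_insert_iff.mp he1 with h | h
    · exact h ▸ Set.mem_insert _ _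
    · exact Set.mem_insert_of_mem _ ⟨h, he2⟩
  have hbridge : G'.IsBridge s(u,v) := by
    rw [isBridge_iff_adj_and_forall_walk_mem_edges]
    · intro p
      by_contra hne
      have hsub : ∀ e ∈ p.edges, e ∈ G.edgeSet := by
        intro e hep
        have := hedge (p.edges_subset_edgeSet hep)
        rcases Set.mem_insert_iff.mp this with h | h
        · exact absurd (h ▸ hep) hne
        · exact h
      exact hnr (p.transfer G hsub).reachable
  intro x c hc
  by_cases he : s(u,v) ∈ c.edges
  · exact hbridge.notMem_edges_of_isCycle hc he
  · have hsub : ∀ e ∈ c.edges, e ∈ G.edgeSet := by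
      intro e hec
      have := hedge (c.edges_subset_edgeSet hec)
      rcases Set.mem_insert_iff.mp this with h | h
      · exact absurd (h ▸ hec) he
      · exact h
    exact hG (c.transfer G hsub) (hc.transfer hsub)

lemma exists_max_forest {V : Type*} [Fintype V] (S : Set (Sym2 V))
    (hS : ∀ e ∈ S, ¬ e.IsDiag) :
    ∃ F, F ⊆ S ∧ (fromEdgeSet F).IsAcyclic ∧
      ∀ u v : V, s(u,v) ∈ S → s(u,v) ∉ F → (fromEdgeSet F).Reachable u v := by
  classical
  set 𝒮 : Set (Set (Sym2 V)) := {F | F ⊆ S ∧ (fromEdgeSet F).IsAcyclic} with h𝒮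
  have hne : 𝒮.Nonempty := ⟨∅, Set.empty_subset _, by simp⟩
  obtain ⟨F, hF, hmax⟩ := Set.Finite.exists_maximalFor (fun F => F.ncard) 𝒮
    (Set.toFinite _) hne
  refine ⟨F, hF.1, hF.2, ?_⟩
  intro u v huvS huvF
  by_contra hnr
  have huv : u ≠ v := fun h => hS _ huvS (by simp [h])
  have hins : insert s(u,v) F ∈ 𝒮 := by
    refine ⟨Set.insert_subset huvS hF.1, acyclic_insert hF.2 huv hnr⟩
  have hcard : F.ncard < (insert s(u,v) F).ncard := by
    rw [Set.ncard_insert_of_notMem huvF (Set.toFinite _)]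
    omega
  have : (insert s(u,v) F).ncard ≤ F.ncard := hmax hins (le_of_lt hcard)
  omega

lemma forest_family {V : Type*} [Fintype V] [DecidableEq V] (G : SimpleGraph V)
    (hA : ∀ F : Set (Sym2 V), (fromEdgeSet F).IsAcyclic → F ⊆ G.edgeSet →
      F.ncard ≤ Fintype.card V - 1)
    (hMF : ∀ S : Set (Sym2 V), (∀ e ∈ S, ¬ e.IsDiag) →
      ∃ F, F ⊆ S ∧ (fromEdgeSet F).IsAcyclic ∧
        ∀ u v : V, s(u,v) ∈ S → s(u,v) ∉ F → (fromEdgeSet F).Reachable u v) :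
    ∀ m : ℕ, ∃ Fs : Fin m → Set (Sym2 V),
      (∀ i, Fs i ⊆ G.edgeSet) ∧
      (∀ i j, i ≠ j → Disjoint (Fs i) (Fs j)) ∧
      (⋃ i, Fs i).ncard ≤ m * (Fintype.card V - 1) ∧
      (∀ i, ∀ u v : V, s(u,v) ∈ G.edgeSet → s(u,v) ∉ ⋃ j, Fs j →
        (fromEdgeSet (Fs i)).Reachable u v) := by
  intro m
  induction m with
  | zero =>
    refine ⟨Fin.elim0, fun i => i.elim0, fun i => i.elim0, ?_, fun i => i.elim0⟩
    simp
  | succ m ih =>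
    obtain ⟨Fs, hsub, hdisj, hcard, hreach⟩ := ih
    set S : Set (Sym2 V) := G.edgeSet \ ⋃ i, Fs i with hSdef
    obtain ⟨F, hFS, hFacyc, hFreach⟩ := hMF S (by
      intro e he
      exact G.not_isDiag_of_mem_edgeSet he.1)
    refine ⟨Fin.cons F Fs, ?_, ?_, ?_, ?_⟩
    · intro i
      induction i using Fin.cases with
      | zero => simpa using hFS.trans Set.diff_subset
      | succ j => simpa using hsub j
    · have hFold : ∀ j, Disjoint F (Fs j) := by
        intro j
        rw [Set.disjoint_left]
        intro e heF heJ
        exact (hFS heF).2 (Set.mem_iUnion.mpr ⟨j, heJ⟩)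
      intro i j hij
      induction i using Fin.cases with
      | zero =>
        induction j using Fin.cases with
        | zero => exact absurd rfl hij
        | succ j' => simpa using hFold j'
      | succ i' =>
        induction j using Fin.cases with
        | zero => simpa using (hFold i').symm
        | succ j' =>
          simpa using hdisj i' j' (fun h => hij (by rw [h]))
    · have hU : (⋃ i, (Fin.cons F Fs : Fin (m+1) → Set (Sym2 V)) i)
          = F ∪ ⋃ i, Fs i := by
        ext e
        simp only [Set.mem_iUnion, Set.mem_union]
        constructor
        · rintro ⟨i, hi⟩
          induction i using Fin.cases with
          | zero => exact Or.inl (by simpa using hi)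
          | succ j => exact Or.inr ⟨j, by simpa using hi⟩
        · rintro (h | ⟨j, hj⟩)
          · exact ⟨0, by simpa using h⟩
          · exact ⟨j.succ, by simpa using hj⟩
      rw [hU]
      have hFcard : F.ncard ≤ Fintype.card V - 1 :=
        hA F hFacyc (hFS.trans Set.diff_subset)
      calc (F ∪ ⋃ i, Fs i).ncard ≤ F.ncard + (⋃ i, Fs i).ncard :=
            Set.ncard_union_le _ _
      _ ≤ (m+1) * (Fintype.card V - 1) := by
            rw [add_mul, one_mul, add_comm (m * (Fintype.card V - 1))]
            exact Nat.add_le_add hFcard hcard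
    · intro i u v huv hnot
      have hnotF : s(u,v) ∉ F := by
        intro h
        exact hnot (Set.mem_iUnion.mpr ⟨0, by simpa using h⟩)
      have hnotOld : s(u,v) ∉ ⋃ j, Fs j := by
        intro h
        obtain ⟨j, hj⟩ := Set.mem_iUnion.mp h
        exact hnot (Set.mem_iUnion.mpr ⟨j.succ, by simpa using hj⟩)
      induction i using Fin.cases with
      | zero =>
        simpa using hFreach u v ⟨huv, hnotOld⟩ hnotF
      | succ j =>
        simpa using hreach j u v huv hnotOld

end NIAux

/-- sparsification of Nagamochi and Ibaraki (Lemma 4.3). -/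
theorem nagamochi_ibaraki {V : Type*} [Fintype V] [DecidableEq V]
    (G : SimpleGraph V) (k : ℕ) :
    ∃ E₀ : Set (Sym2 V), E₀ ⊆ G.edgeSet ∧
      E₀.ncard ≤ (k + 1) * (Fintype.card V - 1) ∧
      ∀ u v : V, s(u, v) ∈ G.edgeSet \ E₀ →
        ∃ p : Fin (k + 1) → (SimpleGraph.fromEdgeSet E₀).Walk u v,
          (∀ i, (p i).IsPath) ∧
          ∀ i j, i ≠ j → ∀ e, e ∈ (p i).edges → e ∉ (p j).edges := by
  classical
  obtain ⟨Fs, hsub, hdisj, hcard, hreach⟩ :=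
    forest_family G (fun F hF hFsub => by
      have h := forest_edge_bound hF
      have heq : F \ {e : Sym2 V | e.IsDiag} = F := by
        ext e
        simp only [Set.mem_diff, Set.mem_setOf_eq, and_iff_left_iff_imp]
        intro heF
        exact G.not_isDiag_of_mem_edgeSet (hFsub heF)
      rwa [edgeSet_fromEdgeSet, Sym2.diagSet, heq] at h)
      (fun S hS => exists_max_forest S hS) (k + 1)
  refine ⟨⋃ i, Fs i, Set.iUnion_subset hsub, hcard, ?_⟩
  rintro u v ⟨huv, hnot⟩
  have hri : ∀ i : Fin (k+1), (fromEdgeSet (Fs i)).Reachable u v :=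
    fun i => hreach i u v huv hnot
  have hedges : ∀ i : Fin (k+1),
      ∀ e ∈ ((hri i).some.toPath : (fromEdgeSet (Fs i)).Walk u v).edges,
        e ∈ (fromEdgeSet (⋃ j, Fs j)).edgeSet := by
    intro i e he
    have h1 := Walk.edges_subset_edgeSet _ he
    rw [edgeSet_fromEdgeSet] at h1 ⊢
    exact ⟨Set.mem_iUnion.mpr ⟨i, h1.1⟩, h1.2⟩
  refine ⟨fun i => ((hri i).some.toPath : (fromEdgeSet (Fs i)).Walk u v).transfer
    (fromEdgeSet (⋃ j, Fs j)) (hedges i), ?_, ?_⟩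
  · intro i
    exact ((hri i).some.toPath).2.transfer (hedges i)
  · intro i j hij e hei hej
    rw [Walk.edges_transfer] at hei hej
    have h1 := Walk.edges_subset_edgeSet _ hei
    have h2 := Walk.edges_subset_edgeSet _ hej
    rw [edgeSet_fromEdgeSet] at h1 h2
    exact Set.disjoint_left.mp (hdisj i j hij) h1.1 h2.1
end

section
/- Let α ∈ (0,1) be a real number and let H be a finite simple graph on n vertices; set ζ = 2⌈1/α⌉ − 1. Then the following are equivalent: (a) every connected component of H has at most α·n vertices; (b) there exists a partition of V(H) into ζ possibly empty sets A₁, A₂, …, A_ζ such that |A_j| ≤ α·n for each j ∈ {1,…,ζ} and no edge of H joins two vertices lying in different parts. -/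
open SimpleGraph

variable {V : Type*}

namespace PackHelper
variable {C : Type*} (B : ℝ) (w : C → ℝ)

noncomputable def push (x : C) : List (List C) → List (List C)
  | [] => [[x]]
  | h :: t => if w x + (h.map w).sum ≤ B then (x :: h) :: t else [x] :: h :: t

noncomputable def pack : List C → List (List C)
  | [] => [[]]
  | x :: xs => push B w x (pack xs)

lemma pack_ne_nil : ∀ l : List C, pack B w l ≠ []
  | [] => by simp [pack]
  | x :: xs => by
    simp only [pack]
    cases pack B w xs with
    | nil => simp [push]
    | cons h t => simp only [push]; split <;> simp

lemma pack_flatten : ∀ l : List C, (pack B w l).flatten = l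
  | [] => by simp [pack]
  | x :: xs => by
    have ih := pack_flatten xs
    simp only [pack]
    cases hp : pack B w xs with
    | nil => exact absurd hp (pack_ne_nil B w xs)
    | cons h t =>
      rw [hp] at ih
      simp only [push]
      split <;> simpa using ih

lemma pack_sum_le (hB : 0 ≤ B) :
    ∀ l : List C, (∀ x ∈ l, w x ≤ B) → ∀ bin ∈ pack B w l, (bin.map w).sum ≤ B
  | [] => by simp [pack, hB]
  | x :: xs => by
    intro hw
    have ih := pack_sum_le hB xs (fun y hy => hw y (by simp [hy]))
    simp only [pack]
    cases hp : pack B w xs with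
    | nil => exact absurd hp (pack_ne_nil B w xs)
    | cons h t =>
      rw [hp] at ih
      simp only [push]
      split
      · rename_i hif
        intro bin hbin
        rcases List.mem_cons.mp hbin with rfl | hb
        · simpa using hif
        · exact ih bin (by simp [hb])
      · intro bin hbin
        rcases List.mem_cons.mp hbin with rfl | hb
        · simpa using hw x (by simp)
        · exact ih bin hb

lemma pack_chain :
    ∀ l : List C, (∀ x ∈ l, 0 ≤ w x) →
      (pack B w l).Chain' (fun b1 b2 => B < (b1.map w).sum + (b2.map w).sum)
  | [] => by simp [pack, List.Chain']
  | x :: xs => by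
    intro hw
    have ih := pack_chain xs (fun y hy => hw y (by simp [hy]))
    simp only [pack]
    cases hp : pack B w xs with
    | nil => exact absurd hp (pack_ne_nil B w xs)
    | cons h t =>
      rw [hp] at ih
      simp only [push]
      split
      · rename_i hif
        cases t with
        | nil => simp [List.Chain']
        | cons h2 t2 =>
          unfold List.Chain' at ih ⊢
          rw [List.isChain_cons_cons] at ih ⊢
          refine ⟨?_, ih.2⟩
          have hx := hw x (by simp)
          simp only [List.map_cons, List.sum_cons]
          linarith [ih.1]
      · rename_i hif
        push_neg at hif
        unfold List.Chain'
        rw [List.isChain_cons_cons]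
        refine ⟨by simpa using hif, ih⟩

lemma chain_sum {B : ℝ} : ∀ L : List ℝ, L.Chain' (fun a b => B < a + b) →
    (∀ x ∈ L, 0 ≤ x) → 2 ≤ L.length → ((L.length / 2 : ℕ) : ℝ) * B < L.sum
  | [], _, _, h => by simp at h
  | [a], _, _, h => by simp at h
  | a :: b :: rest, hc, hnn, _ => by
    have hab : B < a + b := (List.isChain_cons_cons.mp hc).1
    have hrest : rest.Chain' (fun a b => B < a + b) := (List.isChain_cons_cons.mp hc).2.tail
    have hlen : (a :: b :: rest).length / 2 = rest.length / 2 + 1 := by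
      simp only [List.length_cons]; omega
    have hsum : (a :: b :: rest).sum = a + b + rest.sum := by simp; ring
    rw [hlen, hsum]
    by_cases h2 : 2 ≤ rest.length
    · have ihr := chain_sum rest hrest (fun y hy => hnn y (by simp [hy])) h2
      push_cast
      linarith
    · have hr0 : 0 ≤ rest.sum := List.sum_nonneg (fun y hy => hnn y (by simp [hy]))
      have h0 : rest.length / 2 = 0 := by omega
      rw [h0]
      push_cast
      linarith

end PackHelper

/-- small components iff a partition into `2⌈1/α⌉−1` small parts
with no crossing edges (Corollary 6.3). -/
theorem small_components_iff_partition {V : Type*} [Fintype V] [DecidableEq V]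
    {α : ℝ} (hα : α ∈ Set.Ioo (0 : ℝ) 1) (H : SimpleGraph V) :
    (∀ c : H.ConnectedComponent, (c.supp.ncard : ℝ) ≤ α * Fintype.card V) ↔
      ∃ A : Fin (2 * ⌈1 / α⌉₊ - 1) → Set V,
        (∀ i j, i ≠ j → Disjoint (A i) (A j)) ∧
        (⋃ j, A j) = Set.univ ∧
        (∀ j, ((A j).ncard : ℝ) ≤ α * Fintype.card V) ∧
        ∀ u v : V, H.Adj u v → ∀ i j, u ∈ A i → v ∈ A j → i = j := by
  classical
  obtain ⟨hα0, hα1⟩ := hα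
  set n := Fintype.card V with hn
  set m := ⌈1 / α⌉₊ with hm
  have hm2 : 2 ≤ m := by
    have h1 : (1 : ℝ) < 1 / α := one_lt_one_div hα0 hα1
    have := Nat.lt_ceil.mpr (by exact_mod_cast h1 : ((1 : ℕ) : ℝ) < 1 / α)
    omega
  have hinvle : (1 : ℝ) / α ≤ m := by rw [hm]; exact Nat.le_ceil _
  constructor
  · intro hcomp
    haveI : Fintype H.ConnectedComponent := Fintype.ofFinite _
    set B : ℝ := α * n with hB
    have hB0 : 0 ≤ B := by positivity
    set w : H.ConnectedComponent → ℝ := fun c => (c.supp.ncard : ℝ) with hw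
    set l := (Finset.univ : Finset H.ConnectedComponent).toList with hl
    have hlnd : l.Nodup := Finset.nodup_toList _
    set bins := PackHelper.pack B w l with hbins
    have hflat : bins.flatten = l := PackHelper.pack_flatten B w l
    have hndf : bins.flatten.Nodup := hflat ▸ hlnd
    have hbinnd : ∀ bin ∈ bins, bin.Nodup := (List.nodup_flatten.mp hndf).1
    have hdisj := (List.nodup_flatten.mp hndf).2
    have hsupp : ∀ c : H.ConnectedComponent,
        c.supp.ncard = (Finset.univ.filter fun v => H.connectedComponentMk v = c).card := by
      intro c
      rw [Set.ncard_eq_toFinset_card']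
      congr 1
      ext v
      simp [ConnectedComponent.mem_supp_iff]
    have htotal : ∑ c : H.ConnectedComponent, c.supp.ncard = n := by
      have h1 := Finset.card_eq_sum_card_fiberwise
        (f := H.connectedComponentMk) (s := (Finset.univ : Finset V))
        (t := (Finset.univ : Finset H.ConnectedComponent)) (fun x _ => Finset.mem_univ _)
      rw [Finset.card_univ] at h1
      calc ∑ c : H.ConnectedComponent, c.supp.ncard
          = ∑ c : H.ConnectedComponent,
              (Finset.univ.filter fun v => H.connectedComponentMk v = c).card :=
            Finset.sum_congr rfl fun c _ => hsupp c
        _ = n := h1.symm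
    have hNsum : (l.map w).sum = (n : ℝ) := by
      rw [hl, Finset.sum_map_toList]
      rw [hw]
      push_cast [← htotal]
      rfl
    have hwle : ∀ c ∈ l, w c ≤ B := fun c _ => hcomp c
    have hw0 : ∀ c ∈ l, 0 ≤ w c := fun c _ => by positivity
    have hsumle := PackHelper.pack_sum_le B w hB0 l hwle
    have hchain := PackHelper.pack_chain B w l hw0
    set b := bins.length with hbdef
    have hbpos : 0 < b := List.length_pos_iff.mpr (PackHelper.pack_ne_nil B w l)
    have hbz : b ≤ 2 * m - 1 := by
      by_cases h2 : 2 ≤ b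
      · have hc2 : (bins.map fun bin => (bin.map w).sum).Chain' (fun x y => B < x + y) :=
          (List.isChain_map _).mpr hchain
        have hnn : ∀ x ∈ bins.map fun bin => (bin.map w).sum, 0 ≤ x := by
          intro x hx
          obtain ⟨bin, hbin, rfl⟩ := List.mem_map.mp hx
          refine List.sum_nonneg ?_
          intro y hy
          obtain ⟨c, _, rfl⟩ := List.mem_map.mp hy
          positivity
        have hlen2 : 2 ≤ (bins.map fun bin => (bin.map w).sum).length := by simpa using h2
        have hkey := PackHelper.chain_sum _ hc2 hnn hlen2
        have hsum2 : (bins.map fun bin => (bin.map w).sum).sum = (n : ℝ) := by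
          rw [← hNsum, ← hflat, List.map_flatten, List.sum_flatten, List.map_map]
          rfl
        rw [hsum2, List.length_map] at hkey
        -- hkey : ((b / 2 : ℕ) : ℝ) * B < n
        have hn0 : (0 : ℝ) < n := by
          by_contra hc
          push_neg at hc
          have hn00 : (n : ℝ) = 0 := le_antisymm hc (by positivity)
          rw [hn00, hB, hn00, mul_zero, mul_zero] at hkey
          exact lt_irrefl 0 hkey
        have hd : ((b / 2 : ℕ) : ℝ) < 1 / α := by
          rw [hB] at hkey
          rw [lt_div_iff₀ hα0]
          exact (mul_lt_mul_iff_of_pos_right hn0).mp (by rw [mul_assoc, one_mul]; exact hkey)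
        have hdm : b / 2 < m := by
          have : ((b / 2 : ℕ) : ℝ) < (m : ℝ) := lt_of_lt_of_le hd hinvle
          exact_mod_cast this
        omega
      · omega
    set p : H.ConnectedComponent → List H.ConnectedComponent → Prop := fun c bin => c ∈ bin with hp
    have hfind : ∀ c, bins.findIdx (fun bin => decide (c ∈ bin)) < b := by
      intro c
      apply List.findIdx_lt_length.mpr
      have hcl : c ∈ bins.flatten := by
        rw [hflat, hl]
        exact Finset.mem_toList.mpr (Finset.mem_univ c)
      obtain ⟨bin, hbin, hcbin⟩ := List.mem_flatten.mp hcl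
      exact ⟨bin, hbin, by simpa⟩
    set g : H.ConnectedComponent → Fin (2 * m - 1) :=
      fun c => ⟨bins.findIdx (fun bin => decide (c ∈ bin)), lt_of_lt_of_le (hfind c) hbz⟩ with hg
    have hgmem : ∀ c, c ∈ bins[(g c).val]'(hfind c) := by
      intro c
      have := List.findIdx_getElem (p := fun bin => decide (c ∈ bin)) (xs := bins) (w := hfind c)
      simpa using this
    have hgunique : ∀ c (i : ℕ) (hi : i < b), c ∈ bins[i] → (g c).val = i := by
      intro c i hi hci
      by_contra hne
      have hj := hfind c
      rcases Nat.lt_or_ge (g c).val i with hlt | hge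
      · exact (List.pairwise_iff_getElem.mp hdisj _ _ hj hi hlt) (hgmem c) hci
      · have hlt2 : i < (g c).val := lt_of_le_of_ne hge (fun h => hne h.symm)
        exact (List.pairwise_iff_getElem.mp hdisj _ _ hi hj hlt2) hci (hgmem c)
    refine ⟨fun i => {v | g (H.connectedComponentMk v) = i}, ?_, ?_, ?_, ?_⟩
    · intro i j hij
      rw [Set.disjoint_left]
      intro v hvi hvj
      exact hij (hvi.symm.trans hvj)
    · ext v
      simp only [Set.mem_iUnion, Set.mem_setOf_eq, Set.mem_univ, iff_true]
      exact ⟨g (H.connectedComponentMk v), rfl⟩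
    · intro i
      have hAcard : ({v | g (H.connectedComponentMk v) = i}).ncard
          = ∑ c ∈ Finset.univ.filter (fun c => g c = i),
              (Finset.univ.filter fun v => H.connectedComponentMk v = c).card := by
        rw [Set.ncard_eq_toFinset_card']
        have ht : ({v | g (H.connectedComponentMk v) = i}).toFinset
            = Finset.univ.filter fun v => g (H.connectedComponentMk v) = i := by
          ext v; simp
        rw [ht]
        rw [Finset.card_eq_sum_card_fiberwise
          (f := H.connectedComponentMk) (t := Finset.univ.filter fun c => g c = i)
          (fun v hv => by simp at hv ⊢; exact hv)]
        refine Finset.sum_congr rfl fun c hc => ?_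
        simp only [Finset.mem_filter, Finset.mem_univ, true_and] at hc
        congr 1
        ext v
        simp only [Finset.mem_filter, Finset.mem_univ, true_and]
        constructor
        · exact fun h => h.2
        · intro h
          exact ⟨by rw [h, hc], h⟩
      by_cases hib : i.val < b
      · have hfib : Finset.univ.filter (fun c => g c = i) = (bins[i.val]'hib).toFinset := by
          ext c
          simp only [Finset.mem_filter, Finset.mem_univ, true_and, List.mem_toFinset]
          constructor
          · intro h
            have hval : (g c).val = i.val := by rw [h]
            have heq : bins[(g c).val]'(hfind c) = bins[i.val]'hib := by
              congr 1
            exact heq ▸ hgmem c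
          · intro h
            have := hgunique c i.val hib h
            exact Fin.ext this
        rw [hAcard, hfib]
        have hnodup := hbinnd _ (List.getElem_mem hib)
        have hsum3 : ((∑ c ∈ (bins[i.val]'hib).toFinset,
            (Finset.univ.filter fun v => H.connectedComponentMk v = c).card : ℕ) : ℝ)
            = ((bins[i.val]'hib).map w).sum := by
          rw [← List.sum_toFinset w hnodup]
          push_cast
          refine Finset.sum_congr rfl fun c _ => ?_
          show ((Finset.univ.filter fun v => H.connectedComponentMk v = c).card : ℝ)
            = (c.supp.ncard : ℝ)
          rw [hsupp c]
        rw [hsum3]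
        exact hsumle _ (List.getElem_mem hib)
      · have hfib : Finset.univ.filter (fun c => g c = i) = ∅ := by
          ext c
          simp only [Finset.mem_filter, Finset.mem_univ, true_and, Finset.notMem_empty,
            iff_false]
          intro h
          have := hfind c
          rw [show bins.findIdx (fun bin => decide (c ∈ bin)) = (g c).val from rfl, h] at this
          omega
        rw [hAcard, hfib]
        simpa using hB0
    · intro u v huv i j hu hv
      have hmk : H.connectedComponentMk u = H.connectedComponentMk v :=
        ConnectedComponent.sound huv.reachable
      simp only [Set.mem_setOf_eq] at hu hv
      rw [← hu, ← hv, hmk]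
  · rintro ⟨A, hAdisj, hcover, hsize, hedge⟩ c
    obtain ⟨v, hv⟩ := c.exists_rep
    have hvu : v ∈ ⋃ j, A j := by rw [hcover]; trivial
    obtain ⟨i, hvi⟩ := Set.mem_iUnion.mp hvu
    have key : ∀ u ww (p : H.Walk u ww), ww ∈ A i → u ∈ A i := by
      intro u ww p
      induction p with
      | nil => exact fun h => h
      | @cons a bb cc hab q ih =>
        intro hcc
        obtain ⟨j, haj⟩ := Set.mem_iUnion.mp (by rw [hcover]; trivial : a ∈ ⋃ j, A j)
        have := hedge a bb hab j i haj (ih hcc)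
        rwa [this] at haj
    have hsub : c.supp ⊆ A i := by
      intro u hu
      rw [ConnectedComponent.mem_supp_iff] at hu
      have hr : H.Reachable u v := ConnectedComponent.eq.mp (hu.trans hv.symm)
      obtain ⟨p⟩ := hr
      exact key u v p hvi
    have hle : c.supp.ncard ≤ (A i).ncard := Set.ncard_le_ncard hsub (Set.toFinite _)
    calc (c.supp.ncard : ℝ) ≤ ((A i).ncard : ℝ) := by exact_mod_cast hle
    _ ≤ α * n := hsize i
end

section
/- Let G be a finite simple graph, k a nonnegative integer, and S ⊆ V(G) a set that is (2k,k)-unbreakable in G. Let c : V(G) → {black, white} be a 2-colouring of the vertices such that at most k edges of G have endpoints of different colours. Then min(|c⁻¹(black) ∩ S|, |c⁻¹(white) ∩ S|) ≤ 3k. -/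
open SimpleGraph

variable {V : Type*}

/-- any `2`-colouring with at most `k` bichromatic edges colours
all but at most `3k` vertices of a `(2k,k)`-unbreakable set with one colour. -/
theorem unbreakable_colouring {V : Type*} [Fintype V] [DecidableEq V]
    (G : SimpleGraph V) (k : ℕ) (S : Set V)
    (hS : Unbreakable G S (2 * k) k) (c : V → Bool)
    (hcut : {e : Sym2 V | ∃ u v : V, e = s(u, v) ∧ G.Adj u v ∧ c u ≠ c v}.ncard
      ≤ k) :
    min ({v | c v = true} ∩ S).ncard ({v | c v = false} ∩ S).ncard
      ≤ 3 * k := by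
    classical
  set E : Set (Sym2 V) := {e : Sym2 V | ∃ u v : V, e = s(u, v) ∧ G.Adj u v ∧ c u ≠ c v} with hE
  set W : Set V := {v | c v = true ∧ ∃ u, G.Adj v u ∧ c u = false} with hWdef
  -- choose for each w ∈ W a white neighbour
  have hWex : ∀ w ∈ W, ∃ u, G.Adj w u ∧ c u = false := fun w hw => hw.2
  choose! f hf1 hf2 using hWex
  have hWle : W.ncard ≤ k := by
    refine le_trans (Set.ncard_le_ncard_of_injOn (fun w => s(w, f w)) ?_ ?_ (Set.toFinite E)) hcut
    · intro w hw
      exact ⟨w, f w, rfl, hf1 w hw, by simp [hw.1, hf2 w hw]⟩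
    · intro w hw w' hw' h
      rw [Sym2.eq_iff] at h
      rcases h with ⟨h1, _⟩ | ⟨h1, h2⟩
      · exact h1
      · exfalso
        have := hf2 w' hw'
        rw [← h1] at this
        rw [hw.1] at this
        exact Bool.noConfusion this
  have hWsub : W ⊆ {v | c v = true} := fun w hw => hw.1
  -- the separation
  have hsep := hS {v | c v = true} ({v | c v = false} ∪ W) ?_ ?_ ?_
  · have hAB : {v | c v = true} \ ({v | c v = false} ∪ W) = {v | c v = true} \ W := by
      ext v
      simp only [Set.mem_diff, Set.mem_union, Set.mem_setOf_eq]
      constructor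
      · rintro ⟨h1, h2⟩; exact ⟨h1, fun h => h2 (Or.inr h)⟩
      · rintro ⟨h1, h2⟩
        refine ⟨h1, ?_⟩
        rintro (h | h)
        · rw [h1] at h; exact Bool.noConfusion h
        · exact h2 h
    have hBA : ({v | c v = false} ∪ W) \ {v | c v = true} = {v | c v = false} := by
      ext v
      simp only [Set.mem_diff, Set.mem_union, Set.mem_setOf_eq]
      constructor
      · rintro ⟨h1 | h1, h2⟩
        · exact h1
        · exact absurd h1.1 h2
      · intro h1
        refine ⟨Or.inl h1, fun h => ?_⟩
        rw [h1] at h; exact Bool.noConfusion h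
    rw [hAB, hBA] at hsep
    rcases hsep with h | h
    · refine le_trans (min_le_left _ _) ?_
      have hsub : {v | c v = true} ∩ S ⊆ ({v | c v = true} \ W) ∩ S ∪ W := by
        intro v ⟨hv1, hv2⟩
        by_cases hvW : v ∈ W
        · exact Or.inr hvW
        · exact Or.inl ⟨⟨hv1, hvW⟩, hv2⟩
      calc ({v | c v = true} ∩ S).ncard ≤ (({v | c v = true} \ W) ∩ S ∪ W).ncard :=
            Set.ncard_le_ncard hsub (Set.toFinite _)
        _ ≤ (({v | c v = true} \ W) ∩ S).ncard + W.ncard := Set.ncard_union_le _ _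
        _ ≤ 2 * k + k := Nat.add_le_add h hWle
        _ = 3 * k := by ring
    · exact le_trans (min_le_right _ _) (le_trans h (by omega))
  · apply Set.eq_univ_iff_forall.mpr
    intro v
    rcases Bool.eq_false_or_eq_true (c v) with h | h
    · exact Or.inl (show v ∈ {v | c v = true} from h)
    · exact Or.inr (Or.inl (show v ∈ {v | c v = false} from h))
  · intro a ha b hb hadj
    have ha1 : c a = true := ha.1
    have hbf : c b = false := by
      rcases hb.1 with h | h
      · exact h
      · exact absurd h.1 hb.2
    exact ha.2 (Or.inr (show a ∈ W from ⟨ha1, b, hadj, hbf⟩))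
  · have hsub : {v | c v = true} ∩ ({v | c v = false} ∪ W) ⊆ W := by
      rintro v ⟨hv1, hv2⟩
      rcases hv2 with h | h
      · have h1 : c v = true := hv1
        have h2 : c v = false := h
        rw [h1] at h2
        exact Bool.noConfusion h2
      · exact h
    exact le_trans (Set.ncard_le_ncard hsub (Set.toFinite _)) hWle
end

section
/- Let G be a finite simple graph, q and k nonnegative integers, and X ⊆ V(G) a set that is (q,k)-unbreakable in G with |X| ≥ 3q + k + 1. Then for every set Z ⊆ V(G) with |Z| ≤ k there exists a connected component D of G − Z such that |X ∖ (V(D) ∪ Z)| ≤ q; that is, removing any at most k vertices from G leaves all of X, except for at most q vertices, in a single connected component. -/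
open SimpleGraph

variable {V : Type*}

/-- A set `U` that avoids `Z` and is closed under adjacency within `Zᶜ`,
i.e. a union of connected components of `G − Z`. -/
def ClosedAvoid (G : SimpleGraph V) (Z U : Set V) : Prop :=
  U ⊆ Zᶜ ∧ ∀ u ∈ U, ∀ w, G.Adj u w → w ∈ Zᶜ → w ∈ U

lemma unbreak_side {V : Type*} [Fintype V] (G : SimpleGraph V) (q k : ℕ)
    (X Z S : Set V) (hX : Unbreakable G X q k) (hZ : Z.ncard ≤ k)
    (hS : ClosedAvoid G Z S) :
    (X ∩ S).ncard ≤ q ∨ (X ∩ (S ∪ Z)ᶜ).ncard ≤ q := by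
  have hAB : (S ∪ Z) \ Sᶜ = S := by
    ext v
    simp only [Set.mem_diff, Set.mem_union, Set.mem_compl_iff, not_not]
    constructor
    · rintro ⟨_, h⟩; exact h
    · intro h; exact ⟨Or.inl h, h⟩
  have hBA : Sᶜ \ (S ∪ Z) = (S ∪ Z)ᶜ := by
    ext v
    simp only [Set.mem_diff, Set.mem_compl_iff, Set.mem_union]
    tauto
  have h := hX (S ∪ Z) Sᶜ ?_ ?_ ?_
  · rw [hAB, hBA] at h
    rcases h with h | h
    · left; rwa [Set.inter_comm] at h
    · right; rwa [Set.inter_comm] at h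
  · rw [Set.eq_univ_iff_forall]
    intro v
    by_cases hv : v ∈ S
    · exact Or.inl (Or.inl hv)
    · exact Or.inr hv
  · intro a ha b hb hadj
    rw [hAB] at ha
    rw [hBA] at hb
    have hbZ : b ∈ Zᶜ := fun hbz => hb (Or.inr hbz)
    exact hb (Or.inl (hS.2 a ha b hadj hbZ))
  · refine le_trans (Set.ncard_le_ncard ?_ Z.toFinite) hZ
    intro v hv
    rcases hv.1 with h | h
    · exact absurd h hv.2
    · exact h

/-- removing at most `k` vertices from `G` leaves all but at most
`q` vertices of a large `(q,k)`-unbreakable set in one connected component. -/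
theorem unbreakable_large_component {V : Type*} [Fintype V] [DecidableEq V]
    (G : SimpleGraph V) (q k : ℕ) (X : Set V)
    (hX : Unbreakable G X q k) (hXcard : 3 * q + k + 1 ≤ X.ncard) :
    ∀ Z : Set V, Z.ncard ≤ k →
      ∃ D : Set V, IsCompOf G Z D ∧ (X \ (D ∪ Z)).ncard ≤ q := by
  classical
  intro Z hZ
  -- `X` has at least `3q+1` vertices outside `Z`.
  have hXsplit : X = (X ∩ Z) ∪ (X ∩ Zᶜ) := by
    ext v; by_cases hv : v ∈ Z <;> simp [hv]
  have hXZc : 3 * q + 1 ≤ (X ∩ Zᶜ).ncard := by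
    have h1 : X.ncard ≤ (X ∩ Z).ncard + (X ∩ Zᶜ).ncard := by
      calc X.ncard = ((X ∩ Z) ∪ (X ∩ Zᶜ)).ncard := by rw [← hXsplit]
        _ ≤ (X ∩ Z).ncard + (X ∩ Zᶜ).ncard := Set.ncard_union_le _ _
    have h2 : (X ∩ Z).ncard ≤ k :=
      le_trans (Set.ncard_le_ncard Set.inter_subset_right Z.toFinite) hZ
    omega
  -- pick a cardinality-minimal union of components `U` with `|X ∩ U| ≥ q+1`
  have hex : ∃ n : ℕ, ∃ U : Set V,
      (ClosedAvoid G Z U ∧ q + 1 ≤ (X ∩ U).ncard) ∧ U.ncard = n := by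
    refine ⟨Zᶜ.ncard, Zᶜ, ⟨⟨subset_rfl, fun u _ w _ hw => hw⟩, ?_⟩, rfl⟩
    omega
  obtain ⟨U, ⟨⟨hUsub, hUcl⟩, hUX⟩, hUn⟩ := Nat.find_spec hex
  have hmin : ∀ U' : Set V, ClosedAvoid G Z U' → q + 1 ≤ (X ∩ U').ncard →
      Nat.find hex ≤ U'.ncard := by
    intro U' h1 h2
    exact Nat.find_le ⟨U', ⟨h1, h2⟩, rfl⟩
  -- pick `x ∈ X ∩ U` and let `D` be the component of `x` in `G − Z`
  have hne : (X ∩ U).Nonempty := by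
    apply Set.nonempty_of_ncard_ne_zero; omega
  obtain ⟨x, hxX, hxU⟩ := hne
  have hxZc : x ∈ Zᶜ := hUsub hxU
  set D : Set V :=
    {v | ∃ h : v ∈ Zᶜ, (G.induce Zᶜ).Reachable ⟨x, hxZc⟩ ⟨v, h⟩} with hD
  have hxD : x ∈ D := ⟨hxZc, Reachable.refl _⟩
  have hDZc : D ⊆ Zᶜ := fun v hv => hv.1
  have hDcl : ∀ u ∈ D, ∀ w, G.Adj u w → w ∈ Zᶜ → w ∈ D := by
    rintro u ⟨huZ, hur⟩ w huw hwZ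
    exact ⟨hwZ, hur.trans (Adj.reachable (by exact huw :
      (G.induce Zᶜ).Adj ⟨u, huZ⟩ ⟨w, hwZ⟩))⟩
  -- walks in `G − Z` starting in `D` stay in `D`
  have walkD : ∀ (a b : ↥Zᶜ) (w : (G.induce Zᶜ).Walk a b),
      ∀ (ha : ↑a ∈ D) (hb : ↑b ∈ D),
      (G.induce D).Reachable ⟨a.1, ha⟩ ⟨b.1, hb⟩ := by
    intro a b w
    induction w with
    | nil => intro ha hb; exact Reachable.refl _
    | @cons u v w' hadj p ih =>
      intro ha hb
      have hv : ↑v ∈ D := hDcl ↑u ha ↑v hadj v.2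
      exact (Adj.reachable (by exact hadj :
        (G.induce D).Adj ⟨u.1, ha⟩ ⟨v.1, hv⟩)).trans (ih hv hb)
  -- walks in `G − Z` starting in a closed set stay in it
  have walkU : ∀ (a b : ↥Zᶜ) (w : (G.induce Zᶜ).Walk a b), ↑a ∈ U → ↑b ∈ U := by
    intro a b w
    induction w with
    | nil => exact id
    | @cons u v w' hadj p ih =>
      intro ha
      exact ih (hUcl ↑u ha ↑v hadj v.2)
  have hDU : D ⊆ U := by
    rintro v ⟨hvZ, ⟨w⟩⟩
    exact walkU _ _ w hxU
  -- `D` induces a connected subgraph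
  have hDconn : (G.induce D).Connected := by
    rw [connected_iff]
    refine ⟨?_, ⟨⟨x, hxD⟩⟩⟩
    intro a b
    obtain ⟨ha1, hra⟩ := a.2
    obtain ⟨hb1, hrb⟩ := b.2
    obtain ⟨w⟩ := hra.symm.trans hrb
    exact walkD _ _ w a.2 b.2
  -- `D` is maximal
  have hDmax : ∀ D', D ⊆ D' → D' ⊆ Zᶜ → (G.induce D').Connected → D' = D := by
    intro D' hDD' hD'Z hconn
    refine Set.Subset.antisymm ?_ hDD'
    intro v hv
    have hr : (G.induce D').Reachable ⟨x, hDD' hxD⟩ ⟨v, hv⟩ :=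
      hconn.preconnected _ _
    have hr2 : (G.induce Zᶜ).Reachable ⟨x, hxZc⟩ ⟨v, hD'Z hv⟩ :=
      hr.map (⟨fun a => ⟨a.1, hD'Z a.2⟩, fun h => h⟩ : G.induce D' →g G.induce Zᶜ)
    exact ⟨hD'Z hv, hr2⟩
  have hDcomp : IsCompOf G Z D := ⟨hDZc, hDconn, hDmax⟩
  -- apply unbreakability to `D`
  rcases unbreak_side G q k X Z D hX hZ ⟨hDZc, hDcl⟩ with hside | hside
  · -- `|X ∩ D| ≤ q`: derive a contradiction using minimality of `U`
    exfalso
    have hUDcl : ClosedAvoid G Z (U \ D) := by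
      refine ⟨fun v hv => hUsub hv.1, ?_⟩
      rintro u ⟨huU, huD⟩ w huw hwZ
      refine ⟨hUcl u huU w huw hwZ, fun hwD => huD ?_⟩
      exact hDcl w hwD u huw.symm (hUsub huU)
    have hss : U \ D ⊂ U := by
      rw [Set.ssubset_iff_subset_ne]
      refine ⟨Set.diff_subset, fun h => ?_⟩
      have : x ∈ U \ D := h.symm ▸ hxU
      exact this.2 hxD
    have hlt : (U \ D).ncard < U.ncard := Set.ncard_lt_ncard hss U.toFinite
    have hUDle : (X ∩ (U \ D)).ncard ≤ q := by
      by_contra h'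
      have := hmin (U \ D) hUDcl (by omega)
      omega
    have hUle : (X ∩ U).ncard ≤ 2 * q := by
      have hsub : X ∩ U ⊆ (X ∩ (U \ D)) ∪ (X ∩ D) := by
        rintro v ⟨hvX, hvU⟩
        by_cases hvD : v ∈ D
        · exact Or.inr ⟨hvX, hvD⟩
        · exact Or.inl ⟨hvX, hvU, hvD⟩
      have := le_trans (Set.ncard_le_ncard hsub ((X ∩ (U \ D)) ∪ (X ∩ D)).toFinite)
        (Set.ncard_union_le _ _)
      omega
    rcases unbreak_side G q k X Z U hX hZ ⟨hUsub, hUcl⟩ with h2 | h2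
    · omega
    · -- lower bound on `|X ∩ (U ∪ Z)ᶜ|`
      have hsub : X ⊆ (X ∩ U) ∪ (X ∩ Z) ∪ (X ∩ (U ∪ Z)ᶜ) := by
        intro v hv
        by_cases hvU : v ∈ U
        · exact Or.inl (Or.inl ⟨hv, hvU⟩)
        · by_cases hvZ : v ∈ Z
          · exact Or.inl (Or.inr ⟨hv, hvZ⟩)
          · exact Or.inr ⟨hv, fun h => h.elim hvU hvZ⟩
      have h3 := le_trans (Set.ncard_le_ncard hsub (Set.toFinite _))
        (le_trans (Set.ncard_union_le _ _)
          (add_le_add_left (Set.ncard_union_le _ _) _))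
      have h4 : (X ∩ Z).ncard ≤ k :=
        le_trans (Set.ncard_le_ncard Set.inter_subset_right Z.toFinite) hZ
      omega
  · -- success: `D` is the desired component
    refine ⟨D, hDcomp, ?_⟩
    rw [Set.diff_eq]
    exact hside
end
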